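/- arXiv:1606.03621 — 3 statements merged into one kernel-verified Lean document; each statement's English description precedes it below -/
import Mathlib

section
/- For p, q > 1 and r ∈ (0,1), Δ_{p,q}(r) = ((1−1/p)π_{p,q}/(2(1+1/q−1/p)))·[F(1/q, 1−1/p; 2+1/q−1/p; r^p) − F(1/q, 1−1/p; 2+1/q−1/p; 1−r^p)], where Δ_{p,q}(r) = (E_{p,q}(r) − (r')^p K_{p,q}(r))/r^p − (E_{p,q}(r') − r^p K_{p,q}(r'))/(r')^p with r' = (1−r^p)^{1/p}. -/
open Real Set Filter Topology

/-- Gaussian hypergeometric function `F(a,b;c;z)` as a power series. -/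
noncomputable def hypF (a b c z : ℝ) : ℝ :=
  ∑' n : ℕ, ((ascPochhammer ℝ n).eval a * (ascPochhammer ℝ n).eval b /
    ((ascPochhammer ℝ n).eval c * (n.factorial : ℝ))) * z ^ n

/-- Generalized π: `π_{p,q} = (2/q) B(1-1/p, 1/q)` with `B(x,y) = Γ(x)Γ(y)/Γ(x+y)`. -/
noncomputable def piGen (p q : ℝ) : ℝ :=
  (2 / q) * (Real.Gamma (1 - 1/p) * Real.Gamma (1/q) / Real.Gamma (1 - 1/p + 1/q))

/-- Generalized complete (p,q)-elliptic integral of the first kind. -/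
noncomputable def Kgen (p q r : ℝ) : ℝ :=
  (piGen p q / 2) * hypF (1/q) (1 - 1/p) (1 - 1/p + 1/q) (r ^ p)

/-- Generalized complete (p,q)-elliptic integral of the second kind. -/
noncomputable def Egen (p q r : ℝ) : ℝ :=
  (piGen p q / 2) * hypF (1/q) (-(1/p)) (1 - 1/p + 1/q) (r ^ p)

/-- The function `Δ_{p,q}` with `r' = (1-r^p)^{1/p}`. -/
noncomputable def DeltaGen (p q r : ℝ) : ℝ :=
  (Egen p q r - ((1 - r ^ p) ^ (1/p)) ^ p * Kgen p q r) / r ^ p -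
  (Egen p q ((1 - r ^ p) ^ (1/p)) - r ^ p * Kgen p q ((1 - r ^ p) ^ (1/p))) /
    ((1 - r ^ p) ^ (1/p)) ^ p

/-- Coefficients of the hypergeometric series. -/
noncomputable def hco (a b c : ℝ) (n : ℕ) : ℝ :=
  (ascPochhammer ℝ n).eval a * (ascPochhammer ℝ n).eval b /
    ((ascPochhammer ℝ n).eval c * (n.factorial : ℝ))

lemma hypF_eq (a b c z : ℝ) : hypF a b c z = ∑' n : ℕ, hco a b c n * z ^ n := rfl

lemma asc_succ_left_eval (n : ℕ) (t : ℝ) :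
    (ascPochhammer ℝ (n+1)).eval t = t * (ascPochhammer ℝ n).eval (t+1) := by
  rw [ascPochhammer_succ_left, Polynomial.eval_mul, Polynomial.eval_comp]
  simp

lemma asc_mono (n : ℕ) {s t : ℝ} (hs : 0 < s) (hst : s ≤ t) :
    (ascPochhammer ℝ n).eval s ≤ (ascPochhammer ℝ n).eval t := by
  induction n with
  | zero => simp
  | succ n ih =>
    have ht : 0 < t := lt_of_lt_of_le hs hst
    rw [ascPochhammer_succ_eval, ascPochhammer_succ_eval]
    exact mul_le_mul ih (by linarith) (by positivity)
      (le_of_lt (ascPochhammer_pos n t ht))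

lemma asc_le_factorial (n : ℕ) {t : ℝ} (h0 : 0 < t) (h1 : t ≤ 1) :
    (ascPochhammer ℝ n).eval t ≤ (n.factorial : ℝ) := by
  have h := asc_mono n h0 h1
  rwa [ascPochhammer_eval_one] at h

lemma asc_abs_le_factorial (n : ℕ) {d : ℝ} (h0 : -1 < d) (h1 : d < 0) :
    |(ascPochhammer ℝ n).eval d| ≤ (n.factorial : ℝ) := by
  cases n with
  | zero => simp
  | succ n =>
    rw [asc_succ_left_eval, abs_mul]
    have hd1 : 0 < d + 1 := by linarith
    have hle := asc_le_factorial n hd1 (by linarith)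
    have hpos := (ascPochhammer_pos n _ hd1).le
    rw [abs_of_nonneg hpos, abs_of_neg h1]
    calc -d * (ascPochhammer ℝ n).eval (d+1) ≤ 1 * (n.factorial : ℝ) :=
          mul_le_mul (by linarith) hle hpos (by norm_num)
      _ ≤ ((n+1).factorial : ℝ) := by
          rw [one_mul]
          exact_mod_cast Nat.factorial_le (Nat.le_succ n)

lemma summable_aux {a c x : ℝ} (ha : 0 < a) (hac : a ≤ c) {w : ℕ → ℝ}
    (hw : ∀ n, |w n| ≤ (n.factorial : ℝ)) (hx : |x| < 1) :
    Summable (fun n : ℕ => (ascPochhammer ℝ n).eval a * w n /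
      ((ascPochhammer ℝ n).eval c * (n.factorial : ℝ)) * x ^ n) := by
  have hc : 0 < c := lt_of_lt_of_le ha hac
  refine Summable.of_norm_bounded
    (summable_geometric_of_lt_one (abs_nonneg x) hx) (fun n => ?_)
  have hA := ascPochhammer_pos n a ha
  have hC := ascPochhammer_pos n c hc
  have hden : (0:ℝ) < (ascPochhammer ℝ n).eval c * (n.factorial : ℝ) := by positivity
  have hfrac : |(ascPochhammer ℝ n).eval a * w n /
      ((ascPochhammer ℝ n).eval c * (n.factorial : ℝ))| ≤ 1 := by
    rw [abs_div, abs_of_pos hden, div_le_one hden, abs_mul,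
      abs_of_pos hA]
    exact mul_le_mul (asc_mono n ha hac) (hw n) (abs_nonneg _) hC.le
  calc ‖(ascPochhammer ℝ n).eval a * w n /
      ((ascPochhammer ℝ n).eval c * (n.factorial : ℝ)) * x ^ n‖
      = |(ascPochhammer ℝ n).eval a * w n /
        ((ascPochhammer ℝ n).eval c * (n.factorial : ℝ))| * |x| ^ n := by
        rw [Real.norm_eq_abs, abs_mul, abs_pow]
    _ ≤ 1 * |x| ^ n := by
        exact mul_le_mul_of_nonneg_right hfrac (by positivity)
    _ = |x| ^ n := one_mul _

set_option maxHeartbeats 1000000 in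
lemma coef_id {a b : ℝ} (ha : 0 < a) (hb0 : 0 < b) (n : ℕ) :
    hco a (b-1) (a+b) (n+1) - hco a b (a+b) (n+1) + hco a b (a+b) n
      = b / (a+b) * hco a b (a+b+1) n := by
  have hc : 0 < a + b := by linarith
  have e1 : (ascPochhammer ℝ (n+1)).eval a = (ascPochhammer ℝ n).eval a * (a + n) :=
    ascPochhammer_succ_eval n a
  have e2 : (ascPochhammer ℝ (n+1)).eval (b-1) = (b-1) * (ascPochhammer ℝ n).eval b := by
    rw [asc_succ_left_eval, sub_add_cancel]
  have e3 : (ascPochhammer ℝ (n+1)).eval b = (ascPochhammer ℝ n).eval b * (b + n) :=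
    ascPochhammer_succ_eval n b
  have e4 : (ascPochhammer ℝ (n+1)).eval (a+b) = (ascPochhammer ℝ n).eval (a+b) * (a+b+n) :=
    ascPochhammer_succ_eval n (a+b)
  have e5 : (ascPochhammer ℝ n).eval (a+b+1)
      = (ascPochhammer ℝ n).eval (a+b) * (a+b+n) / (a+b) := by
    have h := asc_succ_left_eval n (a+b)
    rw [eq_div_iff hc.ne']
    nlinarith [h, e4]
  have hCpos := ascPochhammer_pos n (a+b) hc
  have hfac : (0:ℝ) < (n.factorial : ℝ) := by exact_mod_cast Nat.factorial_pos n
  have habn : (0:ℝ) < a + b + n := by positivity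
  unfold hco
  rw [e1, e2, e3, e4, e5, Nat.factorial_succ]
  push_cast
  field_simp
  ring

set_option maxHeartbeats 2000000 in
lemma key {a b x : ℝ} (ha : 0 < a) (hb0 : 0 < b) (hb1 : b < 1)
    (hx0 : 0 < x) (hx1 : x < 1) :
    hypF a (b - 1) (a + b) x - (1 - x) * hypF a b (a + b) x
      = x * (b / (a + b)) * hypF a b (a + b + 1) x := by
  have hc : 0 < a + b := by linarith
  have hxabs : |x| < 1 := by rw [abs_of_pos hx0]; exact hx1
  have hsE : Summable (fun n => hco a (b-1) (a+b) n * x ^ n) :=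
    summable_aux ha (by linarith)
      (fun n => asc_abs_le_factorial n (by linarith) (by linarith)) hxabs
  have hwb : ∀ n : ℕ, |(ascPochhammer ℝ n).eval b| ≤ (n.factorial : ℝ) := fun n => by
    rw [abs_of_pos (ascPochhammer_pos n b hb0)]
    exact asc_le_factorial n hb0 hb1.le
  have hsK : Summable (fun n => hco a b (a+b) n * x ^ n) :=
    summable_aux ha (by linarith) hwb hxabs
  have hsU : Summable (fun n => hco a b (a+b+1) n * x ^ n) :=
    summable_aux ha (by linarith) hwb hxabs
  have hs1 : Summable (fun n => (hco a (b-1) (a+b) n - hco a b (a+b) n) * x ^ n) :=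
    (hsE.sub hsK).congr fun n => by ring
  have h1 : hypF a (b-1) (a+b) x - hypF a b (a+b) x
      = ∑' n, (hco a (b-1) (a+b) n - hco a b (a+b) n) * x ^ n := by
    rw [hypF_eq, hypF_eq, ← Summable.tsum_sub hsE hsK]
    exact tsum_congr fun n => by ring
  have hzero : (hco a (b-1) (a+b) 0 - hco a b (a+b) 0) * x ^ 0 = 0 := by
    simp [hco]
  have h2 : ∑' n, (hco a (b-1) (a+b) n - hco a b (a+b) n) * x ^ n
      = ∑' n, (hco a (b-1) (a+b) (n+1) - hco a b (a+b) (n+1)) * x ^ (n+1) := by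
    rw [Summable.tsum_eq_zero_add hs1, hzero, zero_add]
  have h3 : x * hypF a b (a+b) x = ∑' n, hco a b (a+b) n * x ^ (n+1) := by
    rw [hypF_eq, ← tsum_mul_left]
    exact tsum_congr fun n => by ring
  have hs1' : Summable (fun n => (hco a (b-1) (a+b) (n+1) - hco a b (a+b) (n+1)) * x ^ (n+1)) :=
    (summable_nat_add_iff 1).mpr hs1
  have hs3' : Summable (fun n => hco a b (a+b) n * x ^ (n+1)) :=
    (hsK.mul_left x).congr fun n => by ring
  have lhs_eq : hypF a (b - 1) (a + b) x - (1 - x) * hypF a b (a + b) x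
      = ∑' n, ((hco a (b-1) (a+b) (n+1) - hco a b (a+b) (n+1) + hco a b (a+b) n) * x ^ (n+1)) := by
    have : hypF a (b - 1) (a + b) x - (1 - x) * hypF a b (a + b) x
        = (hypF a (b-1) (a+b) x - hypF a b (a+b) x) + x * hypF a b (a+b) x := by ring
    rw [this, h1, h2, h3, ← Summable.tsum_add hs1' hs3']
    exact tsum_congr fun n => by ring
  have rhs_eq : x * (b / (a + b)) * hypF a b (a + b + 1) x
      = ∑' n, (x * (b / (a+b)) * (hco a b (a+b+1) n * x ^ n)) := by
    rw [hypF_eq, ← tsum_mul_left]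
  rw [lhs_eq, rhs_eq]
  refine tsum_congr fun n => ?_
  rw [coef_id ha hb0 n]
  ring


lemma alg (pg c' F K G y z : ℝ) (hy : y ≠ 0) (h : F - z * K = y * c' * G) :
    (pg / 2 * F - z * (pg / 2 * K)) / y = pg / 2 * (c' * G) := by
  have h2 : pg / 2 * F - z * (pg / 2 * K) = pg / 2 * (F - z * K) := by ring
  rw [h2, h]
  field_simp

theorem stmt7 (p q r : ℝ) (hp : 1 < p) (hq : 1 < q) (hr : r ∈ Set.Ioo (0:ℝ) 1) :
    DeltaGen p q r =
      ((1 - 1/p) * piGen p q / (2 * (1 + 1/q - 1/p))) *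
        (hypF (1/q) (1 - 1/p) (2 + 1/q - 1/p) (r ^ p) -
          hypF (1/q) (1 - 1/p) (2 + 1/q - 1/p) (1 - r ^ p)) := by
  obtain ⟨hr0, hr1⟩ := hr
  have hp0 : (0:ℝ) < p := by linarith
  have ha : (0:ℝ) < 1/q := by positivity
  have hb0 : (0:ℝ) < 1 - 1/p := by
    have : 1/p < 1 := by rw [div_lt_one hp0]; exact hp
    linarith
  have hb1 : (1:ℝ) - 1/p < 1 := by
    have : (0:ℝ) < 1/p := by positivity
    linarith
  have hc : (0:ℝ) < 1/q + (1 - 1/p) := by linarith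
  have hx0 : 0 < r ^ p := Real.rpow_pos_of_pos hr0 p
  have hx1 : r ^ p < 1 := Real.rpow_lt_one hr0.le hr1 hp0
  have hx1' : (0:ℝ) < 1 - r ^ p := by linarith
  have hrp : ((1 - r ^ p) ^ (1/p)) ^ p = 1 - r ^ p := by
    rw [← Real.rpow_mul hx1'.le, one_div_mul_cancel hp0.ne', Real.rpow_one]
  have hkey1 := key ha hb0 hb1 hx0 hx1
  have hkey2 := key ha hb0 hb1 hx1' (by linarith)
  have g1 : (1:ℝ) - 1/p - 1 = -(1/p) := by ring
  have g2 : (1:ℝ)/q + (1 - 1/p) = 1 - 1/p + 1/q := by ring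
  have g3 : (1:ℝ) - 1/p + 1/q + 1 = 2 + 1/q - 1/p := by ring
  have g4 : (1:ℝ) - (1 - r ^ p) = r ^ p := by ring
  rw [g1, g2, g3] at hkey1 hkey2
  rw [g4] at hkey2
  have hcne : (1:ℝ) - 1/p + 1/q ≠ 0 := by rw [← g2]; exact hc.ne'
  have hcne2 : (1:ℝ) + 1/q - 1/p ≠ 0 := by
    have : (1:ℝ) + 1/q - 1/p = 1/q + (1 - 1/p) := by ring
    rw [this]; exact hc.ne'
  simp only [DeltaGen, Egen, Kgen, hrp]
  rw [alg (piGen p q) ((1 - 1/p) / (1 - 1/p + 1/q)) _ _ _ _ _ hx0.ne' hkey1,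
    alg (piGen p q) ((1 - 1/p) / (1 - 1/p + 1/q)) _ _ _ _ _ hx1'.ne' hkey2]
  field_simp
  ring
end

section
/- For p, q > 1 satisfying (i) 2 + 1/p + 1/p² ≤ 5/p + 1/q < 3 + 1/p² and (ii) ε(p,q) = 20 − 42/p + 6/q + 21/p² − 2/q² − 20/(pq) + 9/(p²q) − 3/p³ − 1/(p³q) > 0, the function Δ_{p,q} is strictly convex on (0,1), where Δ_{p,q}(r) = (E_{p,q}(r) − (r')^p K_{p,q}(r))/r^p − (E_{p,q}(r') − r^p K_{p,q}(r'))/(r')^p and r' = (1−r^p)^{1/p}. -/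
open Real Set Filter Topology

namespace Stmt8Aux
set_option linter.unusedSectionVars false

/-- Pochhammer symbol as a real function. -/
noncomputable def poch (x : ℝ) (n : ℕ) : ℝ := (ascPochhammer ℝ n).eval x

lemma poch_zero (x : ℝ) : poch x 0 = 1 := by simp [poch]

lemma poch_succ (x : ℝ) (n : ℕ) : poch x (n+1) = poch x n * (x + n) := by
  simp [poch, ascPochhammer_succ_eval]

lemma poch_succ_left (x : ℝ) (n : ℕ) : poch x (n+1) = x * poch (x+1) n := by
  simp [poch, ascPochhammer_succ_left, Polynomial.eval_comp]

lemma poch_pos {x : ℝ} (hx : 0 < x) (n : ℕ) : 0 < poch x n := by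
  induction n with
  | zero => simp [poch_zero]
  | succ n ih => rw [poch_succ]; positivity

/-- coefficient sequence of the series g. -/
noncomputable def A (a b : ℝ) (n : ℕ) : ℝ :=
  b * (poch a n * poch b n) / (poch (a+b) (n+1) * n.factorial)

/-- coefficient sequence of F(a,b;a+b;·). -/
noncomputable def T2 (a b : ℝ) (n : ℕ) : ℝ :=
  poch a n * poch b n / (poch (a+b) n * n.factorial)

/-- coefficient sequence of F(a,b-1;a+b;·). -/
noncomputable def T1 (a b : ℝ) (n : ℕ) : ℝ :=
  poch a n * poch (b-1) n / (poch (a+b) n * n.factorial)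

section basic
variable {a b : ℝ} (ha : 0 < a) (ha1 : a < 1) (hb : 0 < b) (hb1 : b < 1)
include ha hb

lemma hc : 0 < a + b := by linarith

lemma T2_pos (n : ℕ) : 0 < T2 a b n := by
  have := poch_pos ha n; have := poch_pos hb n
  have := poch_pos (hc ha hb) n
  have : (0:ℝ) < n.factorial := by exact_mod_cast n.factorial_pos
  unfold T2; positivity

lemma A_pos (n : ℕ) : 0 < A a b n := by
  have := poch_pos ha n; have := poch_pos hb n
  have := poch_pos (hc ha hb) (n+1)
  have : (0:ℝ) < n.factorial := by exact_mod_cast n.factorial_pos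
  unfold A; positivity

lemma A_eq_T2 (n : ℕ) : A a b n = b * T2 a b n / (a + b + n) := by
  have h1 := poch_pos (hc ha hb) n
  have h2 : (0:ℝ) < a + b + n := by have := hc ha hb; positivity
  have h3 : (0:ℝ) < n.factorial := by exact_mod_cast n.factorial_pos
  unfold A T2
  rw [poch_succ]
  field_simp

lemma T2_succ (n : ℕ) : T2 a b (n+1) = T2 a b n * ((a+n)*(b+n)/((a+b+n)*(n+1))) := by
  have h1 := poch_pos (hc ha hb) n
  have h2 : (0:ℝ) < a + b + n := by have := hc ha hb; positivity
  have h3 : (0:ℝ) < n.factorial := by exact_mod_cast n.factorial_pos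
  unfold T2
  rw [poch_succ, poch_succ, poch_succ, Nat.factorial_succ]
  push_cast
  field_simp

include ha1 hb1 in
lemma T2_le_one (n : ℕ) : T2 a b n ≤ 1 := by
  induction n with
  | zero => simp [T2, poch_zero]
  | succ n ih =>
    rw [T2_succ ha hb]
    have h2 : (0:ℝ) < a + b + n := by have := hc ha hb; positivity
    have hfac : (a+n)*(b+n)/((a+b+n)*(n+1)) ≤ 1 := by
      rw [div_le_one (by positivity)]
      nlinarith [mul_pos ha hb]
    have hfac0 : (0:ℝ) ≤ (a+n)*(b+n)/((a+b+n)*(n+1)) := by positivity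
    calc T2 a b n * ((a+n)*(b+n)/((a+b+n)*(n+1))) ≤ 1 * 1 := by
          apply mul_le_mul ih hfac hfac0 zero_le_one
      _ = 1 := by ring

include ha1 hb1 in
lemma A_le_one (n : ℕ) : A a b n ≤ 1 := by
  rw [A_eq_T2 ha hb]
  have h2 : (0:ℝ) < a + b + n := by have := hc ha hb; positivity
  rw [div_le_one h2]
  have := T2_le_one ha ha1 hb hb1 n
  have := T2_pos ha hb n
  nlinarith

lemma T1_succ_eq (n : ℕ) : T1 a b (n+1) = (b-1)/(b+n) * T2 a b (n+1) := by
  have h1 := poch_pos (hc ha hb) (n+1)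
  have h3 : (0:ℝ) < (n+1).factorial := by exact_mod_cast (n+1).factorial_pos
  have hbn : (0:ℝ) < b + n := by positivity
  unfold T1 T2
  have e : poch (b-1) (n+1) = (b-1) * poch b n := by
    have := poch_succ_left (b-1) n
    simpa using this
  rw [e, poch_succ b n]
  field_simp

include ha1 hb1 in
lemma T1_abs_le (n : ℕ) : |T1 a b n| ≤ 1/b := by
  cases n with
  | zero =>
    have : T1 a b 0 = 1 := by simp [T1, poch_zero]
    rw [this, abs_one, le_div_iff₀ hb]
    nlinarith
  | succ n =>
    rw [T1_succ_eq ha hb]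
    have hbn : (0:ℝ) < b + n := by positivity
    have h2 := T2_pos ha hb (n+1)
    have h2' := T2_le_one ha ha1 hb hb1 (n+1)
    rw [abs_mul, abs_div]
    have : |b - 1| = 1 - b := by rw [abs_of_nonpos (by linarith)]; ring
    rw [this, abs_of_pos hbn, abs_of_pos h2]
    have hle1 : (1-b)/(b+n) ≤ 1/b := by
      rw [div_le_div_iff₀ hbn hb]; nlinarith
    calc (1-b)/(b+n) * T2 a b (n+1) ≤ (1/b) * 1 := by
          apply mul_le_mul hle1 h2' (le_of_lt h2) (by positivity)
      _ = 1/b := by ring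

end basic


section summable
variable {C : ℕ → ℝ} {M : ℝ}

lemma summable_shape0 (hM : ∀ n, |C n| ≤ M) {x t : ℝ} (hx : |x| ≤ t) (ht : t < 1) :
    Summable fun n => C n * x ^ n := by
  have ht0 : 0 ≤ t := le_trans (abs_nonneg x) hx
  apply Summable.of_norm_bounded (g := fun n => M * t ^ n)
    ((summable_geometric_of_lt_one ht0 ht).mul_left M)
  intro n
  rw [norm_mul, norm_pow, Real.norm_eq_abs, Real.norm_eq_abs]
  exact mul_le_mul (hM n) (pow_le_pow_left₀ (abs_nonneg x) hx n) (by positivity) (le_trans (abs_nonneg _) (hM 0))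

lemma summable_nt1 {t : ℝ} (ht0 : 0 ≤ t) (ht : t < 1) :
    Summable fun n : ℕ => (n : ℝ) * t ^ (n - 1) := by
  rw [← summable_nat_add_iff 1]
  have h1 : Summable fun n : ℕ => (n : ℝ) ^ 1 * t ^ n :=
    summable_pow_mul_geometric_of_norm_lt_one 1 (by rwa [Real.norm_eq_abs, abs_of_nonneg ht0])
  have h0 : Summable fun n : ℕ => t ^ n := summable_geometric_of_lt_one ht0 ht
  have := (h1.add h0)
  apply this.congr
  intro n
  simp [pow_one]
  push_cast
  ring

lemma summable_nt2 {t : ℝ} (ht0 : 0 ≤ t) (ht : t < 1) :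
    Summable fun n : ℕ => (n : ℝ) * (((n - 1 : ℕ)) : ℝ) * t ^ (n - 1 - 1) := by
  rw [← summable_nat_add_iff 2]
  have h2 : Summable fun n : ℕ => (n : ℝ) ^ 2 * t ^ n :=
    summable_pow_mul_geometric_of_norm_lt_one 2 (by rwa [Real.norm_eq_abs, abs_of_nonneg ht0])
  have h1 : Summable fun n : ℕ => (n : ℝ) ^ 1 * t ^ n :=
    summable_pow_mul_geometric_of_norm_lt_one 1 (by rwa [Real.norm_eq_abs, abs_of_nonneg ht0])
  have h0 : Summable fun n : ℕ => t ^ n := summable_geometric_of_lt_one ht0 ht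
  apply ((h2.add (h1.mul_left 3)).add (h0.mul_left 2)).congr
  intro n
  simp only [show n + 2 - 1 - 1 = n from rfl, show n + 2 - 1 = n + 1 from rfl]
  push_cast
  ring

lemma summable_shape1 (hM : ∀ n, |C n| ≤ M) {x t : ℝ} (hx : |x| ≤ t) (ht : t < 1) :
    Summable fun n : ℕ => C n * ((n : ℝ) * x ^ (n - 1)) := by
  have ht0 : 0 ≤ t := le_trans (abs_nonneg x) hx
  apply Summable.of_norm_bounded (g := fun n : ℕ => M * ((n : ℝ) * t ^ (n-1)))
    ((summable_nt1 ht0 ht).mul_left M)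
  intro n
  rw [norm_mul, norm_mul, norm_pow, Real.norm_eq_abs, Real.norm_eq_abs, Real.norm_eq_abs,
    Nat.abs_cast]
  exact mul_le_mul (hM n)
    (mul_le_mul_of_nonneg_left (pow_le_pow_left₀ (abs_nonneg x) hx _) (Nat.cast_nonneg n))
    (by positivity) (le_trans (abs_nonneg _) (hM 0))

lemma summable_shape2 (hM : ∀ n, |C n| ≤ M) {x t : ℝ} (hx : |x| ≤ t) (ht : t < 1) :
    Summable fun n : ℕ => C n * ((n : ℝ) * (((n - 1 : ℕ) : ℝ) * x ^ (n - 1 - 1))) := by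
  have ht0 : 0 ≤ t := le_trans (abs_nonneg x) hx
  apply Summable.of_norm_bounded (g := fun n : ℕ => M * ((n : ℝ) * (((n-1:ℕ):ℝ)) * t ^ (n-1-1)))
    ((summable_nt2 ht0 ht).mul_left M)
  intro n
  rw [Real.norm_eq_abs, abs_mul, abs_mul, abs_mul, abs_pow, Nat.abs_cast, Nat.abs_cast]
  calc |C n| * ((n:ℝ) * (((n-1:ℕ):ℝ) * |x| ^ (n-1-1)))
      ≤ M * ((n:ℝ) * (((n-1:ℕ):ℝ) * t ^ (n-1-1))) := by
        apply mul_le_mul (hM n) _ (by positivity) (le_trans (abs_nonneg _) (hM 0))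
        apply mul_le_mul_of_nonneg_left _ (Nat.cast_nonneg n)
        exact mul_le_mul_of_nonneg_left (pow_le_pow_left₀ (abs_nonneg x) hx _) (Nat.cast_nonneg _)
    _ = M * ((n:ℝ) * (((n-1:ℕ):ℝ)) * t ^ (n-1-1)) := by ring

end summable

section series
variable (a b : ℝ)

/-- The series `g`. -/
noncomputable def G0 (x : ℝ) : ℝ := ∑' n : ℕ, A a b n * x ^ n
/-- Its derivative series. -/
noncomputable def G1 (x : ℝ) : ℝ := ∑' n : ℕ, A a b n * ((n : ℝ) * x ^ (n - 1))
/-- Its second derivative series. -/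
noncomputable def G2 (x : ℝ) : ℝ :=
  ∑' n : ℕ, A a b n * ((n : ℝ) * (((n - 1 : ℕ) : ℝ) * x ^ (n - 1 - 1)))

variable {a b}
variable (ha : 0 < a) (ha1 : a < 1) (hb : 0 < b) (hb1 : b < 1)
include ha ha1 hb hb1

lemma A_abs_le (n : ℕ) : |A a b n| ≤ 1 := by
  rw [abs_of_pos (A_pos ha hb n)]; exact A_le_one ha ha1 hb hb1 n

lemma hasDerivAt_G0 {x : ℝ} (hx : x ∈ Ioo (0:ℝ) 1) : HasDerivAt (G0 a b) (G1 a b x) x := by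
  obtain ⟨hx0, hx1⟩ := hx
  set s : ℝ := (x + 1) / 2 with hs
  have hxs : x < s := by simp only [hs]; linarith
  have hs1 : s < 1 := by simp only [hs]; linarith
  have hs0 : 0 < s := by simp only [hs]; linarith
  have habs : ∀ y : ℝ, y ∈ Ioo (-s) s → |y| ≤ s := fun y hy => abs_le.2 ⟨le_of_lt hy.1, le_of_lt hy.2⟩
  apply hasDerivAt_tsum_of_isPreconnected
    (u := fun n : ℕ => (n : ℝ) * s ^ (n - 1)) (summable_nt1 (le_of_lt hs0) hs1)
    isOpen_Ioo isPreconnected_Ioo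
    (g := fun n y => A a b n * y ^ n)
    (g' := fun n y => A a b n * ((n : ℝ) * y ^ (n - 1)))
    (t := Ioo (-s) s)
  · intro n y _
    exact (hasDerivAt_pow n y).const_mul (A a b n)
  · intro n y hy
    have h := habs y hy
    rw [Real.norm_eq_abs, abs_mul, abs_mul, abs_pow, Nat.abs_cast]
    calc |A a b n| * ((n:ℝ) * |y| ^ (n-1)) ≤ 1 * ((n:ℝ) * s ^ (n-1)) := by
          apply mul_le_mul (A_abs_le ha ha1 hb hb1 n) _ (by positivity) zero_le_one
          exact mul_le_mul_of_nonneg_left (pow_le_pow_left₀ (abs_nonneg y) h _) (Nat.cast_nonneg n)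
      _ = (n:ℝ) * s ^ (n-1) := one_mul _
  · exact mem_Ioo.2 ⟨by linarith, hxs⟩
  · exact summable_shape0 (A_abs_le ha ha1 hb hb1) (le_of_eq (abs_of_pos hx0)|>.trans (le_of_lt hxs)) hs1
  · exact mem_Ioo.2 ⟨by linarith, hxs⟩

lemma hasDerivAt_G1 {x : ℝ} (hx : x ∈ Ioo (0:ℝ) 1) : HasDerivAt (G1 a b) (G2 a b x) x := by
  obtain ⟨hx0, hx1⟩ := hx
  set s : ℝ := (x + 1) / 2 with hs
  have hxs : x < s := by simp only [hs]; linarith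
  have hs1 : s < 1 := by simp only [hs]; linarith
  have hs0 : 0 < s := by simp only [hs]; linarith
  have habs : ∀ y : ℝ, y ∈ Ioo (-s) s → |y| ≤ s := fun y hy => abs_le.2 ⟨le_of_lt hy.1, le_of_lt hy.2⟩
  apply hasDerivAt_tsum_of_isPreconnected
    (u := fun n : ℕ => (n : ℝ) * (((n - 1 : ℕ) : ℝ) * s ^ (n - 1 - 1)))
    (by simpa [mul_assoc] using summable_nt2 (le_of_lt hs0) hs1)
    isOpen_Ioo isPreconnected_Ioo
    (g := fun n y => A a b n * ((n : ℝ) * y ^ (n - 1)))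
    (g' := fun n y => A a b n * ((n : ℝ) * (((n - 1 : ℕ) : ℝ) * y ^ (n - 1 - 1))))
    (t := Ioo (-s) s)
  · intro n y _
    have h := (hasDerivAt_pow (n-1) y).const_mul (A a b n * (n:ℝ))
    simpa [mul_assoc] using h
  · intro n y hy
    have h := habs y hy
    rw [Real.norm_eq_abs, abs_mul, abs_mul, abs_mul, abs_pow, Nat.abs_cast, Nat.abs_cast]
    calc |A a b n| * ((n:ℝ) * (((n-1:ℕ):ℝ) * |y| ^ (n-1-1)))
        ≤ 1 * ((n:ℝ) * (((n-1:ℕ):ℝ) * s ^ (n-1-1))) := by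
          apply mul_le_mul (A_abs_le ha ha1 hb hb1 n) _ (by positivity) zero_le_one
          apply mul_le_mul_of_nonneg_left _ (Nat.cast_nonneg n)
          exact mul_le_mul_of_nonneg_left (pow_le_pow_left₀ (abs_nonneg y) h _) (Nat.cast_nonneg _)
      _ = (n:ℝ) * (((n-1:ℕ):ℝ) * s ^ (n-1-1)) := one_mul _
  · exact mem_Ioo.2 ⟨by linarith, hxs⟩
  · exact summable_shape1 (A_abs_le ha ha1 hb hb1) (le_of_eq (abs_of_pos hx0)|>.trans (le_of_lt hxs)) hs1
  · exact mem_Ioo.2 ⟨by linarith, hxs⟩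

lemma abs_le_of_Ioo {x : ℝ} (hx : x ∈ Ioo (0:ℝ) 1) : |x| ≤ 1 := by
  rw [abs_of_pos hx.1]; exact le_of_lt hx.2

lemma G1_rep {x : ℝ} (hx : x ∈ Ioo (0:ℝ) 1) :
    G1 a b x = ∑' n : ℕ, A a b (n+1) * (((n:ℝ) + 1) * x ^ n) := by
  have hxa : |x| ≤ (x+1)/2 := by rw [abs_of_pos hx.1]; linarith [hx.2]
  have hs1 : (x+1)/2 < 1 := by linarith [hx.2]
  have hsum : Summable fun n : ℕ => A a b n * ((n : ℝ) * x ^ (n - 1)) :=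
    summable_shape1 (A_abs_le ha ha1 hb hb1) hxa hs1
  rw [G1, Summable.tsum_eq_zero_add hsum]
  simp only [Nat.cast_zero, zero_mul, mul_zero, zero_add]
  apply tsum_congr
  intro n
  have : n + 1 - 1 = n := rfl
  rw [this]
  push_cast
  ring

lemma G2_rep {x : ℝ} (hx : x ∈ Ioo (0:ℝ) 1) :
    G2 a b x = ∑' n : ℕ, A a b (n+2) * ((((n:ℝ) + 2) * ((n:ℝ) + 1)) * x ^ n) := by
  have hxa : |x| ≤ (x+1)/2 := by rw [abs_of_pos hx.1]; linarith [hx.2]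
  have hs1 : (x+1)/2 < 1 := by linarith [hx.2]
  have hsum : Summable fun n : ℕ => A a b n * ((n : ℝ) * (((n - 1 : ℕ):ℝ) * x ^ (n - 1 - 1))) :=
    summable_shape2 (A_abs_le ha ha1 hb hb1) hxa hs1
  rw [G2, Summable.tsum_eq_zero_add hsum]
  simp only [Nat.cast_zero, zero_mul, mul_zero, zero_add]
  have hsum2 : Summable fun n : ℕ =>
      A a b (n+1) * (((n+1 : ℕ) : ℝ) * ((((n+1) - 1 : ℕ):ℝ) * x ^ ((n+1) - 1 - 1))) :=
    ((summable_nat_add_iff 1).2 hsum)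
  rw [Summable.tsum_eq_zero_add hsum2]
  norm_num
  apply tsum_congr
  intro n
  have e3 : n + 1 + 1 = n + 2 := rfl
  rw [e3]
  push_cast
  ring

end series

section key
variable {a b p : ℝ}
variable (ha : 0 < a) (ha1 : a < 1) (hb : 0 < b) (hb1 : b < 1) (hp : 1 < p)

/-- coefficient `c₀`. -/
noncomputable def c0 (a b p : ℝ) : ℝ := 2*p*A a b 2 - (p-1)*A a b 1
/-- coefficient `c₁`. -/
noncomputable def c1 (a b p : ℝ) : ℝ := 6*p*A a b 3 - (4*p-2)*A a b 2
/-- the compensating finitely supported sequence. -/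
noncomputable def dfun (a b p u : ℝ) (n : ℕ) : ℝ :=
  if n = 0 then c0 a b p else if n = 1 then c1 a b p * u else 0

lemma poch_one' (x : ℝ) : poch x 1 = x := by
  rw [show (1:ℕ) = 0+1 from rfl, poch_succ, poch_zero]; push_cast; ring
lemma poch_two' (x : ℝ) : poch x 2 = x*(x+1) := by
  rw [show (2:ℕ) = 1+1 from rfl, poch_succ, poch_one']; push_cast; ring
lemma poch_three' (x : ℝ) : poch x 3 = x*(x+1)*(x+2) := by
  rw [show (3:ℕ) = 2+1 from rfl, poch_succ, poch_two']; push_cast; ring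
lemma poch_four' (x : ℝ) : poch x 4 = x*(x+1)*(x+2)*(x+3) := by
  rw [show (4:ℕ) = 3+1 from rfl, poch_succ, poch_three']; push_cast; ring

lemma A_one : A a b 1 = b*(a*b)/((a+b)*(a+b+1)) := by
  rw [A, poch_one', poch_one', poch_two', Nat.factorial]; norm_num

lemma A_two : A a b 2 = b*(a*(a+1)*(b*(b+1)))/((a+b)*(a+b+1)*(a+b+2)*2) := by
  rw [A, poch_two', poch_two', poch_three']
  norm_num [Nat.factorial]

lemma A_three : A a b 3 = b*(a*(a+1)*(a+2)*(b*(b+1)*(b+2)))/((a+b)*(a+b+1)*(a+b+2)*(a+b+3)*6) := by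
  rw [A, poch_three', poch_three', poch_four']
  norm_num [Nat.factorial]

include ha hb

lemma A_succ (n : ℕ) :
    A a b (n+1) = A a b n * ((a+n)*(b+n)/((a+b+n+1)*(n+1))) := by
  have h1 := poch_pos (hc ha hb) n
  have h2 : (0:ℝ) < a + b + n := by have := hc ha hb; positivity
  have h2' : (0:ℝ) < a + b + (n+1) := by have := hc ha hb; positivity
  have h3 : (0:ℝ) < (n).factorial := by exact_mod_cast (n).factorial_pos
  unfold A
  rw [poch_succ a n, poch_succ b n, poch_succ (a+b) (n+1), poch_succ (a+b) n,
    Nat.factorial_succ]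
  push_cast
  field_simp
  ring

include hp

lemma cm_nonpos (hpb : p*b = p-1) (hmono : a + 1 - b - b^2 < 2*b)
    (n : ℕ) (hn : 2 ≤ n) {w : ℝ} (hw : 0 ≤ w) :
    p*((n:ℝ)+2)*((n:ℝ)+1)*A a b (n+2) * w ≤ ((n:ℝ)+1)*(p*(n:ℝ)+p-1)*A a b (n+1) * w := by
  have hA1 := A_pos ha hb (n+1)
  have hn' : (2:ℝ) ≤ (n:ℝ) := by exact_mod_cast hn
  have h2' : (0:ℝ) < a + b + ((n:ℝ)+1) + 1 := by positivity
  have hrw : A a b (n+2) = A a b (n+1) * ((a+(n+1))*(b+(n+1))/((a+b+(n+1)+1)*((n+1)+1))) := by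
    have := A_succ ha hb (n+1)
    push_cast at this ⊢
    linarith [this]
  rw [hrw]
  have hkey : p*(a+((n:ℝ)+1))*(b+((n:ℝ)+1)) ≤ (p*(n:ℝ)+p-1)*(a+b+((n:ℝ)+1)+1) := by
    have hbn : 2*b ≤ b*(n:ℝ) := by nlinarith
    have : p*(n:ℝ)+p-1 = p*((n:ℝ)+b) := by rw [mul_add, hpb]; ring
    rw [this]
    have hquad : (a+((n:ℝ)+1))*(b+((n:ℝ)+1)) ≤ ((n:ℝ)+b)*(a+b+((n:ℝ)+1)+1) := by nlinarith
    have hp0 : 0 < p := by linarith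
    calc p*(a+((n:ℝ)+1))*(b+((n:ℝ)+1)) = p*((a+((n:ℝ)+1))*(b+((n:ℝ)+1))) := by ring
      _ ≤ p*(((n:ℝ)+b)*(a+b+((n:ℝ)+1)+1)) := by
          apply mul_le_mul_of_nonneg_left hquad (le_of_lt hp0)
      _ = p*((n:ℝ)+b)*(a+b+((n:ℝ)+1)+1) := by ring
  apply mul_le_mul_of_nonneg_right _ hw
  have hfrac : (a+((n:ℝ)+1))*(b+((n:ℝ)+1))/((a+b+((n:ℝ)+1)+1)*(((n:ℝ)+1)+1)) *
      (p*((n:ℝ)+2)*((n:ℝ)+1)) ≤ ((n:ℝ)+1)*(p*(n:ℝ)+p-1) := by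
    rw [div_mul_eq_mul_div, div_le_iff₀ (by positivity)]
    have h0 : (0:ℝ) ≤ ((n:ℝ)+1) := by positivity
    nlinarith [mul_le_mul_of_nonneg_right hkey (mul_nonneg h0 (by positivity : (0:ℝ) ≤ (n:ℝ)+2))]
  calc p*((n:ℝ)+2)*((n:ℝ)+1)*(A a b (n+1) * ((a+((n:ℝ)+1))*(b+((n:ℝ)+1))/((a+b+((n:ℝ)+1)+1)*(((n:ℝ)+1)+1))))
      = A a b (n+1) * ((a+((n:ℝ)+1))*(b+((n:ℝ)+1))/((a+b+((n:ℝ)+1)+1)*(((n:ℝ)+1)+1)) * (p*((n:ℝ)+2)*((n:ℝ)+1))) := by ring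
    _ ≤ A a b (n+1) * (((n:ℝ)+1)*(p*(n:ℝ)+p-1)) := by
        apply mul_le_mul_of_nonneg_left hfrac (le_of_lt hA1)
    _ = ((n:ℝ)+1)*(p*(n:ℝ)+p-1)*A a b (n+1) := by ring

end key

section key2
variable {a b p : ℝ}
variable (ha : 0 < a) (ha1 : a < 1) (hb : 0 < b) (hb1 : b < 1) (hp : 1 < p)

/-- term of `p·x·G2`. -/
noncomputable def Wf (a b p u : ℝ) (n : ℕ) : ℝ := p*(A a b (n+1) * ((((n:ℝ)+1)*(n:ℝ)) * u^n))
/-- term of `(p-1)·G1`. -/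
noncomputable def Vf (a b p u : ℝ) (n : ℕ) : ℝ := (p-1)*(A a b (n+1) * (((n:ℝ)+1) * u^n))
/-- term of `p·G2`. -/
noncomputable def Lf (a b p u : ℝ) (n : ℕ) : ℝ :=
  p*(A a b (n+2) * ((((n:ℝ)+2)*((n:ℝ)+1)) * u^n))

include ha ha1 hb hb1

lemma summable_master (j : ℕ) (α β γ : ℝ) {u : ℝ} (hu0 : 0 ≤ u) (hu1 : u < 1) :
    Summable fun n : ℕ => A a b (n+j) * ((α*(n:ℝ)^2 + β*(n:ℝ) + γ) * u^n) := by
  have hn : ‖u‖ < 1 := by rwa [Real.norm_eq_abs, abs_of_nonneg hu0]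
  apply Summable.of_norm_bounded
    (g := fun n : ℕ => |α| * ((n:ℝ)^2*u^n) + (|β| * ((n:ℝ)^1*u^n) + |γ| * u^n))
  · exact ((summable_pow_mul_geometric_of_norm_lt_one 2 hn).mul_left |α|).add
      (((summable_pow_mul_geometric_of_norm_lt_one 1 hn).mul_left |β|).add
        ((summable_geometric_of_lt_one hu0 hu1).mul_left |γ|))
  · intro n
    rw [Real.norm_eq_abs, abs_mul, abs_mul, abs_pow, abs_of_nonneg hu0]
    have h1 : |A a b (n+j)| ≤ 1 := A_abs_le ha ha1 hb hb1 (n+j)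
    have h2 : |α*(n:ℝ)^2 + β*(n:ℝ) + γ| ≤ |α| * (n:ℝ)^2 + |β| * (n:ℝ)^1 + |γ| := by
      calc |α*(n:ℝ)^2 + β*(n:ℝ) + γ| ≤ |α*(n:ℝ)^2 + β*(n:ℝ)| + |γ| := abs_add_le _ _
        _ ≤ |α*(n:ℝ)^2| + |β*(n:ℝ)| + |γ| := by linarith [abs_add_le (α*(n:ℝ)^2) (β*(n:ℝ))]
        _ = |α| * (n:ℝ)^2 + |β| * (n:ℝ)^1 + |γ| := by
            rw [abs_mul, abs_mul, abs_pow, Nat.abs_cast]; ring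
    have h3 : (0:ℝ) ≤ u^n := pow_nonneg hu0 n
    calc |A a b (n+j)| * (|α*(n:ℝ)^2 + β*(n:ℝ) + γ| * u^n)
        ≤ 1 * ((|α| * (n:ℝ)^2 + |β| * (n:ℝ)^1 + |γ|) * u^n) := by
          apply mul_le_mul h1 (mul_le_mul_of_nonneg_right h2 h3) (by positivity) zero_le_one
      _ = |α| * ((n:ℝ)^2*u^n) + (|β| * ((n:ℝ)^1*u^n) + |γ| * u^n) := by ring

lemma summable_Wf {u : ℝ} (hu0 : 0 ≤ u) (hu1 : u < 1) : Summable (Wf a b p u) := by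
  apply ((summable_master ha ha1 hb hb1 1 1 1 0 hu0 hu1).mul_left p).congr
  intro n; simp only [Wf]; push_cast; ring

lemma summable_Vf {u : ℝ} (hu0 : 0 ≤ u) (hu1 : u < 1) : Summable (Vf a b p u) := by
  apply ((summable_master ha ha1 hb hb1 1 0 1 1 hu0 hu1).mul_left (p-1)).congr
  intro n; simp only [Vf]; push_cast; ring

lemma summable_Lf {u : ℝ} (hu0 : 0 ≤ u) (hu1 : u < 1) : Summable (Lf a b p u) := by
  apply ((summable_master ha ha1 hb hb1 2 1 3 2 hu0 hu1).mul_left p).congr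
  intro n; simp only [Lf]; push_cast; ring

omit ha ha1 hb hb1 in
lemma summable_dfun {u : ℝ} : Summable (dfun a b p u) := by
  apply summable_of_ne_finset_zero (s := ({0,1} : Finset ℕ))
  intro n hn
  simp only [Finset.mem_insert, Finset.mem_singleton, not_or] at hn
  simp [dfun, hn.1, hn.2]

omit ha ha1 hb hb1 in
lemma tsum_dfun {u : ℝ} : ∑' n, dfun a b p u n = c0 a b p + c1 a b p * u := by
  rw [tsum_eq_sum (s := ({0,1} : Finset ℕ))]
  · rw [Finset.sum_pair (by norm_num : (0:ℕ) ≠ 1)]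
    simp [dfun]
  · intro n hn
    simp only [Finset.mem_insert, Finset.mem_singleton, not_or] at hn
    simp [dfun, hn.1, hn.2]

lemma tsum_Wf {x : ℝ} (hx : x ∈ Ioo (0:ℝ) 1) :
    ∑' n, Wf a b p x n = p * x * G2 a b x := by
  have hW := summable_Wf ha ha1 hb hb1 (p := p) (le_of_lt hx.1) hx.2
  rw [G2_rep ha ha1 hb hb1 hx]
  have e : p*x*(∑' n : ℕ, A a b (n+2) * ((((n:ℝ) + 2) * ((n:ℝ) + 1)) * x ^ n))
      = ∑' n : ℕ, (p*x) * (A a b (n+2) * ((((n:ℝ) + 2) * ((n:ℝ) + 1)) * x ^ n)) :=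
    (tsum_mul_left).symm
  rw [e, Summable.tsum_eq_zero_add hW]
  have e0 : Wf a b p x 0 = 0 := by simp [Wf]
  rw [e0, zero_add]
  apply tsum_congr
  intro n
  simp only [Wf]
  push_cast
  ring

lemma tsum_Vf {x : ℝ} (hx : x ∈ Ioo (0:ℝ) 1) :
    ∑' n, Vf a b p x n = (p-1) * G1 a b x := by
  rw [G1_rep ha ha1 hb hb1 hx]
  have e : (p-1)*(∑' n : ℕ, A a b (n+1) * (((n:ℝ) + 1) * x ^ n))
      = ∑' n : ℕ, (p-1) * (A a b (n+1) * (((n:ℝ) + 1) * x ^ n)) := (tsum_mul_left).symm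
  rw [e]
  exact tsum_congr fun n => rfl

lemma tsum_Lf {x : ℝ} (hx : x ∈ Ioo (0:ℝ) 1) :
    ∑' n, Lf a b p x n = p * G2 a b x := by
  rw [G2_rep ha ha1 hb hb1 hx]
  have e : p*(∑' n : ℕ, A a b (n+2) * ((((n:ℝ) + 2) * ((n:ℝ) + 1)) * x ^ n))
      = ∑' n : ℕ, p * (A a b (n+2) * ((((n:ℝ) + 2) * ((n:ℝ) + 1)) * x ^ n)) :=
    (tsum_mul_left).symm
  rw [e]
  exact tsum_congr fun n => rfl

include hp

lemma stepA (hpb : p*b = p-1) (hmono : a + 1 - b - b^2 < 2*b) {u : ℝ} (hu : u ∈ Ioo (0:ℝ) 1) :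
    p * (1-u) * G2 a b u - (p-1) * G1 a b u ≤ c0 a b p + c1 a b p * u := by
  have hu0 := le_of_lt hu.1
  have hu1 := hu.2
  have hW := summable_Wf ha ha1 hb hb1 (p := p) hu0 hu1
  have hV := summable_Vf ha ha1 hb hb1 (p := p) hu0 hu1
  have hL := summable_Lf ha ha1 hb hb1 (p := p) hu0 hu1
  have hd : Summable (dfun a b p u) := summable_dfun
  have hterm : ∀ n : ℕ, Lf a b p u n ≤ Wf a b p u n + Vf a b p u n + dfun a b p u n := by
    intro n
    match n with
    | 0 =>
      apply le_of_eq
      simp only [Lf, Wf, Vf, dfun, if_pos, c0]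
      norm_num
      ring
    | 1 =>
      apply le_of_eq
      simp only [Lf, Wf, Vf, dfun, c1]
      norm_num
      ring
    | (m+2) =>
      have hd0 : dfun a b p u (m+2) = 0 := by simp [dfun]
      rw [hd0, add_zero]
      have hcm := cm_nonpos ha hb hp hpb hmono (m+2) (by omega)
        (w := u^(m+2)) (pow_nonneg hu0 _)
      calc Lf a b p u (m+2)
          = p*((((m+2):ℕ):ℝ)+2)*((((m+2):ℕ):ℝ)+1)*A a b ((m+2)+2) * u^(m+2) := by
            simp only [Lf]; push_cast; ring
        _ ≤ ((((m+2):ℕ):ℝ)+1)*(p*(((m+2):ℕ):ℝ)+p-1)*A a b ((m+2)+1) * u^(m+2) := hcm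
        _ = Wf a b p u (m+2) + Vf a b p u (m+2) := by
            simp only [Wf, Vf]; push_cast; ring
  have hmain := Summable.tsum_le_tsum hterm hL ((hW.add hV).add hd)
  rw [tsum_Lf ha ha1 hb hb1 hu, Summable.tsum_add (hW.add hV) hd, Summable.tsum_add hW hV,
    tsum_Wf ha ha1 hb hb1 hu, tsum_Vf ha ha1 hb hb1 hu, tsum_dfun] at hmain
  nlinarith [hmain]

omit ha ha1 hb hb1 in
lemma stepE0 (hA1 : 0 < A a b 1) (hA2 : 0 < A a b 2) :
    c0 a b p ≤ (p-1)*A a b 1 + (4*p-2)*A a b 2 := by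
  simp only [c0]
  nlinarith

lemma stepE1 (hpb : p*b = p-1)
    (heps : (a+1)*(a+2)*((b+1)*(b+2)) < b*(a+b+3)*(2*(a+b+2)+(a+1)*(b+1))) :
    c0 a b p + c1 a b p ≤ (p-1)*A a b 1 := by
  have hab : (0:ℝ) < a + b := by linarith
  have h1 : (0:ℝ) < a+b+1 := by linarith
  have h2 : (0:ℝ) < a+b+2 := by linarith
  have h3 : (0:ℝ) < a+b+3 := by linarith
  have hp0 : (0:ℝ) < p := by linarith
  have hkey : (p-1)*(A a b 1 + A a b 2) - 3*p*A a b 3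
      = a*b^2*p/(2*((a+b)*(a+b+1)*(a+b+2)*(a+b+3)))
        * (b*(a+b+3)*(2*(a+b+2)+(a+1)*(b+1)) - (a+1)*(a+2)*((b+1)*(b+2))) := by
    rw [A_one, A_two, A_three, show p-1 = p*b from hpb.symm]
    field_simp
    ring
  have hpos : 0 < a*b^2*p/(2*((a+b)*(a+b+1)*(a+b+2)*(a+b+3))) := by positivity
  have : 0 < (p-1)*(A a b 1 + A a b 2) - 3*p*A a b 3 := by
    rw [hkey]
    exact mul_pos hpos (by linarith)
  simp only [c0, c1]
  nlinarith

omit hp in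
lemma stepC (hp' : 1 < p) {x : ℝ} (hx : x ∈ Ioo (0:ℝ) 1) :
    (p-1)*A a b 1 + (4*p-2)*A a b 2*x + (9*p-3)*A a b 3*x^2
      ≤ p * x * G2 a b x + (p-1) * G1 a b x := by
  have hx0 := le_of_lt hx.1
  have hW := summable_Wf ha ha1 hb hb1 (p := p) hx0 hx.2
  have hV := summable_Vf ha ha1 hb hb1 (p := p) hx0 hx.2
  have hrep : p * x * G2 a b x + (p-1) * G1 a b x = ∑' n, (Wf a b p x n + Vf a b p x n) := by
    rw [Summable.tsum_add hW hV, tsum_Wf ha ha1 hb hb1 hx, tsum_Vf ha ha1 hb hb1 hx]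
  rw [hrep]
  have hnonneg : ∀ i : ℕ, i ∉ Finset.range 3 → 0 ≤ Wf a b p x i + Vf a b p x i := by
    intro i _
    have hA := A_pos ha hb (i+1)
    have h1 : (0:ℝ) ≤ p := by linarith
    have h2 : (0:ℝ) ≤ p - 1 := by linarith
    apply add_nonneg
    · exact mul_nonneg h1 (mul_nonneg (le_of_lt hA) (by positivity))
    · exact mul_nonneg h2 (mul_nonneg (le_of_lt hA) (by positivity))
  have hsum := Summable.sum_le_tsum (Finset.range 3) hnonneg (hW.add hV)
  refine le_trans (le_of_eq ?_) hsum
  rw [Finset.sum_range_succ, Finset.sum_range_succ, Finset.sum_range_one]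
  simp only [Wf, Vf]
  norm_num
  ring

lemma keyIneq (hpb : p*b = p-1) (hmono : a + 1 - b - b^2 < 2*b)
    (heps : (a+1)*(a+2)*((b+1)*(b+2)) < b*(a+b+3)*(2*(a+b+2)+(a+1)*(b+1)))
    {x : ℝ} (hx : x ∈ Ioo (0:ℝ) 1) :
    0 < p * x * (G2 a b x - G2 a b (1-x)) + (p-1) * (G1 a b x + G1 a b (1-x)) := by
  have hu : (1-x) ∈ Ioo (0:ℝ) 1 := ⟨by linarith [hx.2], by linarith [hx.1]⟩
  have sA := stepA ha ha1 hb hb1 hp hpb hmono hu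
  have sB := stepE0 hp (A_pos ha hb 1) (A_pos ha hb 2) (a := a) (b := b)
  have sB1 := stepE1 ha ha1 hb hb1 hp hpb heps
  have sC := stepC ha ha1 hb hb1 hp hx
  have e1 : (1:ℝ) - (1-x) = x := by ring
  rw [e1] at sA
  have hA3 := A_pos ha hb 3
  have h9 : 0 < (9*p-3)*A a b 3*x^2 := by
    have : (0:ℝ) < 9*p-3 := by linarith
    have hx2 : (0:ℝ) < x^2 := pow_pos hx.1 2
    exact mul_pos (mul_pos this hA3) hx2
  -- linear interpolation bound: c0 + c1*(1-x) ≤ (p-1)*A1 + (4*p-2)*A2*x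
  have hBint : c0 a b p + c1 a b p * (1-x) ≤ (p-1)*A a b 1 + (4*p-2)*A a b 2*x := by
    have h1x : (0:ℝ) ≤ 1 - x := by linarith [hx.2]
    have hxx : (0:ℝ) ≤ x := le_of_lt hx.1
    nlinarith [mul_le_mul_of_nonneg_right sB (le_of_lt hx.1),
      mul_le_mul_of_nonneg_right sB1 h1x]
  nlinarith [sA, sC, hBint, h9]

end key2

section hypid
variable {a b : ℝ}
variable (ha : 0 < a) (ha1 : a < 1) (hb : 0 < b) (hb1 : b < 1)
include ha hb

lemma coeff_id (n : ℕ) : T1 a b (n+1) - T2 a b (n+1) + T2 a b n = A a b n := by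
  have hbn : (0:ℝ) < b + n := by positivity
  have habn : (0:ℝ) < a + b + n := by have := hc ha hb; positivity
  have hT2 := T2_pos ha hb n
  rw [T1_succ_eq ha hb, T2_succ ha hb, A_eq_T2 ha hb]
  field_simp
  ring

include ha1 hb1

lemma hyp_id {z : ℝ} (hz : z ∈ Ioo (0:ℝ) 1) :
    hypF a (b-1) (a+b) z - (1-z) * hypF a b (a+b) z = z * G0 a b z := by
  have hz0 := hz.1
  have hz1 := hz.2
  have hza : |z| ≤ z := le_of_eq (abs_of_pos hz0)
  have hT1s : Summable fun n => T1 a b n * z^n :=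
    summable_shape0 (T1_abs_le ha ha1 hb hb1) hza hz1
  have hT2s : Summable fun n => T2 a b n * z^n :=
    summable_shape0 (fun n => by
      rw [abs_of_pos (T2_pos ha hb n)]; exact T2_le_one ha ha1 hb hb1 n) hza hz1
  have hAs : Summable fun n => A a b n * z^n :=
    summable_shape0 (A_abs_le ha ha1 hb hb1) hza hz1
  have e1 : hypF a (b-1) (a+b) z = ∑' n, T1 a b n * z^n := rfl
  have e2 : hypF a b (a+b) z = ∑' n, T2 a b n * z^n := rfl
  have e3 : z * G0 a b z = ∑' n, A a b n * z^(n+1) := by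
    rw [G0, ← tsum_mul_left]
    exact tsum_congr fun n => by ring
  rw [e1, e2, e3]
  -- rewrite (1-z) * ∑' T2 = ∑' T2 - ∑' (T2 n z^(n+1))
  have e4 : ∑' n, T2 a b n * z^(n+1) = z * ∑' n, T2 a b n * z^n := by
    rw [← tsum_mul_left]
    exact tsum_congr fun n => by ring
  have hT2s' : Summable fun n => T2 a b n * z^(n+1) := by
    apply (hT2s.mul_left z).congr
    intro n; ring
  have hsub : Summable fun n => T1 a b n * z^n - T2 a b n * z^n := hT1s.sub hT2s
  have hsub' : Summable fun n => T1 a b (n+1) * z^(n+1) - T2 a b (n+1) * z^(n+1) :=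
    (summable_nat_add_iff 1).2 hsub
  have e5 : (∑' n, T1 a b n * z^n) - (∑' n, T2 a b n * z^n)
      = ∑' n, (T1 a b (n+1) * z^(n+1) - T2 a b (n+1) * z^(n+1)) := by
    rw [← Summable.tsum_sub hT1s hT2s, Summable.tsum_eq_zero_add hsub]
    have h0 : T1 a b 0 * z^0 - T2 a b 0 * z^0 = 0 := by
      simp [T1, T2, poch_zero]
    rw [h0, zero_add]
  have e6 : ∑' n, (T1 a b (n+1) * z^(n+1) - T2 a b (n+1) * z^(n+1) + T2 a b n * z^(n+1))
      = ∑' n, A a b n * z^(n+1) := by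
    apply tsum_congr
    intro n
    have := coeff_id ha hb (a := a) (b := b) n
    calc T1 a b (n+1) * z^(n+1) - T2 a b (n+1) * z^(n+1) + T2 a b n * z^(n+1)
        = (T1 a b (n+1) - T2 a b (n+1) + T2 a b n) * z^(n+1) := by ring
      _ = A a b n * z^(n+1) := by rw [this]
  rw [← e6, Summable.tsum_add hsub' hT2s']
  have : (1-z) * ∑' n, T2 a b n * z^n
      = (∑' n, T2 a b n * z^n) - ∑' n, T2 a b n * z^(n+1) := by
    rw [e4]; ring
  rw [this]
  linarith [e5]

end hypid

section final

lemma DeltaGen_eq {p q r : ℝ} (hp : 1 < p) (hq : 1 < q) (hr : r ∈ Ioo (0:ℝ) 1) :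
    DeltaGen p q r = (piGen p q / 2) *
      (G0 (1/q) (1-1/p) (r^p) - G0 (1/q) (1-1/p) (1 - r^p)) := by
  have hp0 : (0:ℝ) < p := by linarith
  have ha : (0:ℝ) < 1/q := by positivity
  have ha1 : 1/q < 1 := by rw [div_lt_one (by linarith)]; linarith
  have hb : (0:ℝ) < 1 - 1/p := by
    have : 1/p < 1 := by rw [div_lt_one hp0]; linarith
    linarith
  have hb1 : 1 - 1/p < 1 := by
    have : (0:ℝ) < 1/p := by positivity
    linarith
  have hx : r^p ∈ Ioo (0:ℝ) 1 :=
    ⟨Real.rpow_pos_of_pos hr.1 p, Real.rpow_lt_one (le_of_lt hr.1) hr.2 hp0⟩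
  have hx' : 1 - r^p ∈ Ioo (0:ℝ) 1 := ⟨by linarith [hx.2], by linarith [hx.1]⟩
  have hx0 : r^p ≠ 0 := ne_of_gt hx.1
  have hx'0 : 1 - r^p ≠ 0 := ne_of_gt hx'.1
  have hrp : ((1 - r^p) ^ (1/p)) ^ p = 1 - r^p := by
    rw [← Real.rpow_mul (le_of_lt hx'.1), one_div, inv_mul_cancel₀ (ne_of_gt hp0),
      Real.rpow_one]
  have ea : -(1/p) = (1 - 1/p) - 1 := by ring
  have ec : 1 - 1/p + 1/q = 1/q + (1 - 1/p) := by ring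
  have h1 := hyp_id ha ha1 hb hb1 hx
  have h2 := hyp_id ha ha1 hb hb1 hx'
  have k1 : ((piGen p q / 2) * hypF (1/q) ((1-1/p)-1) (1/q+(1-1/p)) (r^p)
        - (1 - r^p) * ((piGen p q / 2) * hypF (1/q) (1-1/p) (1/q+(1-1/p)) (r^p))) / r^p
      = (piGen p q / 2) * G0 (1/q) (1-1/p) (r^p) := by
    have e : (piGen p q / 2) * hypF (1/q) ((1-1/p)-1) (1/q+(1-1/p)) (r^p)
        - (1 - r^p) * ((piGen p q / 2) * hypF (1/q) (1-1/p) (1/q+(1-1/p)) (r^p))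
        = ((piGen p q / 2) * G0 (1/q) (1-1/p) (r^p)) * r^p := by
      linear_combination (piGen p q / 2) * h1
    rw [e, mul_div_assoc, div_self hx0, mul_one]
  have k2 : ((piGen p q / 2) * hypF (1/q) ((1-1/p)-1) (1/q+(1-1/p)) (1-r^p)
        - r^p * ((piGen p q / 2) * hypF (1/q) (1-1/p) (1/q+(1-1/p)) (1-r^p))) / (1-r^p)
      = (piGen p q / 2) * G0 (1/q) (1-1/p) (1-r^p) := by
    have e : (piGen p q / 2) * hypF (1/q) ((1-1/p)-1) (1/q+(1-1/p)) (1-r^p)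
        - r^p * ((piGen p q / 2) * hypF (1/q) (1-1/p) (1/q+(1-1/p)) (1-r^p))
        = ((piGen p q / 2) * G0 (1/q) (1-1/p) (1-r^p)) * (1-r^p) := by
      linear_combination (piGen p q / 2) * h2
    rw [e, mul_div_assoc, div_self hx'0, mul_one]
  simp only [DeltaGen, Egen, Kgen]
  rw [hrp, ea, ec, k1, k2]
  ring

end final

section conv

lemma Hconvex {a b p C : ℝ} (ha : 0 < a) (ha1 : a < 1) (hb : 0 < b) (hb1 : b < 1)
    (hp : 1 < p) (hC : 0 < C) (hpb : p*b = p-1) (hmono : a + 1 - b - b^2 < 2*b)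
    (heps : (a+1)*(a+2)*((b+1)*(b+2)) < b*(a+b+3)*(2*(a+b+2)+(a+1)*(b+1))) :
    StrictConvexOn ℝ (Ioo (0:ℝ) 1) (fun r : ℝ => C * (G0 a b (r^p) - G0 a b (1-r^p))) := by
  have hp0 : (0:ℝ) < p := by linarith
  have hmemx : ∀ s : ℝ, s ∈ Ioo (0:ℝ) 1 → s^p ∈ Ioo (0:ℝ) 1 := fun s hs =>
    ⟨Real.rpow_pos_of_pos hs.1 p, Real.rpow_lt_one hs.1.le hs.2 hp0⟩
  have hmemu : ∀ s : ℝ, s ∈ Ioo (0:ℝ) 1 → 1 - s^p ∈ Ioo (0:ℝ) 1 := fun s hs =>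
    ⟨by linarith [(hmemx s hs).2], by linarith [(hmemx s hs).1]⟩
  have hd1 : ∀ s ∈ Ioo (0:ℝ) 1,
      HasDerivAt (fun r : ℝ => C * (G0 a b (r^p) - G0 a b (1-r^p)))
        (C * ((G1 a b (s^p) + G1 a b (1-s^p)) * (p * s^(p-1)))) s := by
    intro s hs
    have hrpow : HasDerivAt (fun y : ℝ => y^p) (p * s^(p-1)) s :=
      Real.hasDerivAt_rpow_const (Or.inl (ne_of_gt hs.1))
    have h1 : HasDerivAt (fun y : ℝ => G0 a b (y^p)) (G1 a b (s^p) * (p * s^(p-1))) s :=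
      by have := (hasDerivAt_G0 ha ha1 hb hb1 (hmemx s hs)).comp s hrpow; exact this
    have hinner : HasDerivAt (fun y : ℝ => 1 - y^p) (-(p * s^(p-1))) s := hrpow.const_sub 1
    have h2 : HasDerivAt (fun y : ℝ => G0 a b (1 - y^p))
        (G1 a b (1-s^p) * (-(p * s^(p-1)))) s :=
      by have := (hasDerivAt_G0 ha ha1 hb hb1 (hmemu s hs)).comp s hinner; exact this
    have h3 := (h1.sub h2).const_mul C
    refine h3.congr_deriv (Eq.symm ?_)
    ring
  have hd2 : ∀ s ∈ Ioo (0:ℝ) 1,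
      HasDerivAt (fun y : ℝ => C * ((G1 a b (y^p) + G1 a b (1-y^p)) * (p * y^(p-1))))
        (C * (p * s^(p-2)) * (p * s^p * (G2 a b (s^p) - G2 a b (1-s^p))
          + (p-1) * (G1 a b (s^p) + G1 a b (1-s^p)))) s := by
    intro s hs
    have hrpow : HasDerivAt (fun y : ℝ => y^p) (p * s^(p-1)) s :=
      Real.hasDerivAt_rpow_const (Or.inl (ne_of_gt hs.1))
    have hinner : HasDerivAt (fun y : ℝ => 1 - y^p) (-(p * s^(p-1))) s := hrpow.const_sub 1
    have hu : HasDerivAt (fun y : ℝ => G1 a b (y^p) + G1 a b (1-y^p))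
        (G2 a b (s^p) * (p * s^(p-1)) + G2 a b (1-s^p) * (-(p * s^(p-1)))) s :=
      by have := ((hasDerivAt_G1 ha ha1 hb hb1 (hmemx s hs)).comp s hrpow).add
           ((hasDerivAt_G1 ha ha1 hb hb1 (hmemu s hs)).comp s hinner); exact this
    have hv : HasDerivAt (fun y : ℝ => p * y^(p-1)) (p * ((p-1) * s^(p-1-1))) s :=
      (Real.hasDerivAt_rpow_const (Or.inl (ne_of_gt hs.1))).const_mul p
    have h5 := (hu.mul hv).const_mul C
    refine h5.congr_deriv (Eq.symm ?_)
    rw [show p-1-1 = p-2 from by ring]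
    have hww : s^(p-1) * s^(p-1) = s^(p-2) * s^p := by
      rw [← Real.rpow_add hs.1, ← Real.rpow_add hs.1]
      congr 1
      ring
    linear_combination (- (C * p * p) * (G2 a b (s^p) - G2 a b (1-s^p))) * hww
  apply strictConvexOn_of_deriv2_pos (convex_Ioo 0 1)
  · intro s hs
    exact (hd1 s hs).continuousAt.continuousWithinAt
  · intro s hs
    rw [interior_Ioo] at hs
    have e : deriv^[2] (fun r : ℝ => C * (G0 a b (r^p) - G0 a b (1-r^p)))
        = deriv (deriv (fun r : ℝ => C * (G0 a b (r^p) - G0 a b (1-r^p)))) := by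
      rw [Function.iterate_succ_apply', Function.iterate_one]
    rw [e]
    have hev : deriv (fun r : ℝ => C * (G0 a b (r^p) - G0 a b (1-r^p)))
        =ᶠ[𝓝 s] (fun y : ℝ => C * ((G1 a b (y^p) + G1 a b (1-y^p)) * (p * y^(p-1)))) := by
      filter_upwards [isOpen_Ioo.mem_nhds hs] with y hy
      exact (hd1 y hy).deriv
    rw [hev.deriv_eq, (hd2 s hs).deriv]
    exact mul_pos (mul_pos hC (mul_pos hp0 (Real.rpow_pos_of_pos hs.1 _)))
      (keyIneq ha ha1 hb hb1 hp hpb hmono heps (hmemx s hs))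

end conv

end Stmt8Aux

open Stmt8Aux in
theorem stmt8 (p q : ℝ) (hp : 1 < p) (hq : 1 < q)
    (h1 : 2 + 1/p + 1/p^2 ≤ 5/p + 1/q) (h1' : 5/p + 1/q < 3 + 1/p^2)
    (h2 : 0 < 20 - 42/p + 6/q + 21/p^2 - 2/q^2 - 20/(p*q) + 9/(p^2*q) - 3/p^3 - 1/(p^3*q)) :
    StrictConvexOn ℝ (Set.Ioo (0:ℝ) 1) (DeltaGen p q) := by
  have hp0 : (0:ℝ) < p := by linarith
  have hq0 : (0:ℝ) < q := by linarith
  have ha : (0:ℝ) < 1/q := by positivity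
  have ha1 : 1/q < 1 := by rw [div_lt_one hq0]; linarith
  have hb : (0:ℝ) < 1 - 1/p := by
    have : 1/p < 1 := by rw [div_lt_one hp0]; linarith
    linarith
  have hb1 : 1 - 1/p < 1 := by
    have : (0:ℝ) < 1/p := by positivity
    linarith
  have hpb : p * (1 - 1/p) = p - 1 := by field_simp
  have hmono : 1/q + 1 - (1 - 1/p) - (1 - 1/p)^2 < 2*(1 - 1/p) := by
    have e : 1/q + 1 - (1 - 1/p) - (1 - 1/p)^2 - 2*(1 - 1/p)
        = 5/p + 1/q - 3 - 1/p^2 := by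
      field_simp
      ring
    linarith [h1', e]
  have heps : (1/q+1)*(1/q+2)*(((1-1/p)+1)*((1-1/p)+2))
      < (1-1/p)*((1/q)+(1-1/p)+3)*(2*((1/q)+(1-1/p)+2)+((1/q)+1)*((1-1/p)+1)) := by
    have keyeq : (1-1/p)*((1/q)+(1-1/p)+3)*(2*((1/q)+(1-1/p)+2)+((1/q)+1)*((1-1/p)+1))
        - (1/q+1)*(1/q+2)*(((1-1/p)+1)*((1-1/p)+2))
        = 20 - 42/p + 6/q + 21/p^2 - 2/q^2 - 20/(p*q) + 9/(p^2*q) - 3/p^3 - 1/(p^3*q) := by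
      field_simp
      ring
    linarith [h2, keyeq]
  have hC : 0 < piGen p q / 2 := by
    have g1 := Real.Gamma_pos_of_pos hb
    have g2 := Real.Gamma_pos_of_pos ha
    have g3 := Real.Gamma_pos_of_pos (show (0:ℝ) < 1 - 1/p + 1/q by linarith)
    have hpi : 0 < piGen p q := by
      rw [piGen]
      exact mul_pos (by positivity) (div_pos (mul_pos g1 g2) g3)
    linarith
  have Hc := Hconvex ha ha1 hb hb1 hp hC hpb hmono heps
  refine ⟨convex_Ioo 0 1, ?_⟩
  intro x hx y hy hxy α β hα hβ hαβ
  have hmem : α • x + β • y ∈ Set.Ioo (0:ℝ) 1 := (convex_Ioo 0 1) hx hy hα.le hβ.le hαβ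
  have e1 := DeltaGen_eq hp hq hx
  have e2 := DeltaGen_eq hp hq hy
  have e3 := DeltaGen_eq hp hq hmem
  have hlt := Hc.2 hx hy hxy hα hβ hαβ
  simp only [smul_eq_mul] at *
  rw [e1, e2, e3]
  exact hlt
end

section
/- For p, q > 1 satisfying conditions 2 + 1/p + 1/p² ≤ 5/p + 1/q < 3 + 1/p² and ε(p,q) > 0, and for all r, s ∈ (0,1): (1−1/p)π_{p,q}/(2(1+1/q−1/p)) − 1 < Δ_{p,q}(rs) − Δ_{p,q}(r) − Δ_{p,q}(s) < 1 − (1−1/p)π_{p,q}/(2(1+1/q−1/p)). -/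
open Real Set Filter Topology

noncomputable def pk (x : ℝ) (n : ℕ) : ℝ := (ascPochhammer ℝ n).eval x
lemma pk_zero (x : ℝ) : pk x 0 = 1 := by simp [pk]
lemma pk_succ (x : ℝ) (n : ℕ) : pk x (n+1) = pk x n * (x + n) := by
  simp [pk, ascPochhammer_succ_right]
lemma pk_shift (x : ℝ) (n : ℕ) : pk x (n+1) = x * pk (x+1) n := by
  simp [pk, ascPochhammer_succ_left, Polynomial.eval_comp]
lemma pk_pos {x : ℝ} (hx : 0 < x) (n : ℕ) : 0 < pk x n := by
  induction n with
  | zero => simp [pk_zero]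
  | succ n ih => rw [pk_succ]; positivity
lemma pk_prod (x : ℝ) (n : ℕ) : pk x n = ∏ j ∈ Finset.range n, (x + j) := by
  induction n with
  | zero => simp [pk_zero]
  | succ n ih => rw [pk_succ, ih, Finset.prod_range_succ]

noncomputable def bb (α β : ℝ) (n : ℕ) : ℝ := pk α n * pk β n / (pk (α+β) n * n.factorial)
noncomputable def aaE (α β : ℝ) (n : ℕ) : ℝ := pk α n * pk (β-1) n / (pk (α+β) n * n.factorial)
noncomputable def cc (α β : ℝ) (n : ℕ) : ℝ := β * bb α β n / (α + β + n)

section params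
variable {α β : ℝ} (hα : 0 < α) (hα1 : α ≤ 1) (hβ : 0 < β) (hβ1 : β ≤ 1)
include hα hβ

lemma bb_zero : bb α β 0 = 1 := by simp [bb, pk_zero]

lemma bb_pos (n : ℕ) : 0 < bb α β n := by
  have h1 := pk_pos hα n; have h2 := pk_pos hβ n
  have h3 := pk_pos (by linarith : (0:ℝ) < α + β) n
  have h4 : (0:ℝ) < n.factorial := by positivity
  exact div_pos (by positivity) (by positivity)

lemma bb_succ (n : ℕ) : bb α β (n+1) = bb α β n * ((α+n)*(β+n)) / ((α+β+n)*(n+1)) := by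
  have h3 := (pk_pos (by linarith : (0:ℝ) < α + β) n).ne'
  have h4 : ((n.factorial : ℝ)) ≠ 0 := by positivity
  simp only [bb, pk_succ, Nat.factorial_succ, Nat.cast_mul, Nat.cast_add, Nat.cast_one]
  field_simp

include hα1 hβ1 in
lemma bb_antitone (n : ℕ) : bb α β (n+1) ≤ bb α β n := by
  rw [bb_succ hα hβ]
  rw [div_le_iff₀ (by positivity)]
  have hb := (bb_pos hα hβ n).le
  have : (α+n)*(β+n) ≤ (α+β+n)*(n+1) := by nlinarith [mul_nonneg hα.le hβ.le]
  nlinarith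

include hα1 hβ1 in
lemma bb_le_one (n : ℕ) : bb α β n ≤ 1 := by
  induction n with
  | zero => rw [bb_zero hα hβ]
  | succ n ih => exact le_trans (bb_antitone hα hα1 hβ hβ1 n) ih

lemma cc_pos (n : ℕ) : 0 < cc α β n := by
  have := bb_pos hα hβ n
  have : (0:ℝ) < α + β + n := by positivity
  exact div_pos (by positivity) this

include hα1 hβ1 in
lemma cc_le_one (n : ℕ) : cc α β n ≤ 1 := by
  have h1 := bb_le_one hα hα1 hβ hβ1 n
  have h2 : (0:ℝ) < α + β + n := by positivity
  rw [cc, div_le_one h2]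
  nlinarith [bb_pos hα hβ n]

/-- the key recurrence: `a_{n+1} - b_{n+1} + b_n = cc n`. -/
lemma key_rec (n : ℕ) : aaE α β (n+1) - bb α β (n+1) + bb α β n = cc α β n := by
  have e1 : pk (β-1) (n+1) = (β-1) * pk β n := by
    rw [pk_shift]; ring_nf
  have e2 : pk β (n+1) = pk β n * (β + n) := pk_succ β n
  have e3 : pk (α+β) (n+1) = pk (α+β) n * (α+β+n) := pk_succ (α+β) n
  have e4 : pk α (n+1) = pk α n * (α + n) := pk_succ α n
  have h1 := (pk_pos hα n).ne'
  have h2 := (pk_pos hβ n).ne'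
  have h3 := (pk_pos (by linarith : (0:ℝ) < α + β) n).ne'
  have h5 : (α+β+(n:ℝ)) ≠ 0 := by positivity
  have h4 : ((n+1).factorial : ℝ) ≠ 0 := by positivity
  have h6 : ((n.factorial : ℝ)) ≠ 0 := by positivity
  have h7 : ((n:ℝ)+1) ≠ 0 := by positivity
  simp only [aaE, bb, cc, e1, e2, e3, e4, Nat.factorial_succ, Nat.cast_mul, Nat.cast_add,
    Nat.cast_one]
  field_simp
  ring

/-- telescoping partial sums of `cc`. -/
lemma cc_partial (N : ℕ) : ∑ n ∈ Finset.range N, cc α β n = (1/α) * (N * bb α β N) := by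
  induction N with
  | zero => simp
  | succ N ih =>
    rw [Finset.sum_range_succ, ih]
    have h5 : (α+β+(N:ℝ)) ≠ 0 := by positivity
    rw [cc, bb_succ hα hβ]
    have h7 : ((N:ℝ)+1) ≠ 0 := by positivity
    have hαne := hα.ne'
    push_cast
    field_simp
    ring
end params


lemma gammaSeq_eq (x : ℝ) (n : ℕ) : Real.GammaSeq x n = (n:ℝ)^x * n.factorial / pk x (n+1) := by
  rw [Real.GammaSeq, pk_prod]

lemma tendsto_nbb {α β : ℝ} (hα : 0 < α) (hβ : 0 < β) :
    Tendsto (fun n : ℕ => (n:ℝ) * bb α β n) atTop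
      (𝓝 (Real.Gamma (α+β) / (Real.Gamma α * Real.Gamma β))) := by
  have hγ : (0:ℝ) < α + β := by linarith
  have hGα := Real.Gamma_pos_of_pos hα
  have hGβ := Real.Gamma_pos_of_pos hβ
  -- auxiliary rational factor tends to 1
  have hrat : Tendsto (fun n : ℕ => ((n:ℝ) * (α+β+n)) / ((α+n)*(β+n))) atTop (𝓝 1) := by
    have h0 : Tendsto (fun n : ℕ => (1 + (α+β)/n) / ((1+α/n)*(1+β/n))) atTop (𝓝 1) := by
      have hc : ∀ c : ℝ, Tendsto (fun n : ℕ => c/(n:ℝ)) atTop (𝓝 0) :=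
        fun c => tendsto_const_div_atTop_nhds_zero_nat c
      have hA : Tendsto (fun n : ℕ => 1 + (α+β)/(n:ℝ)) atTop (𝓝 (1+0)) :=
        tendsto_const_nhds.add (hc (α+β))
      have hB : Tendsto (fun n : ℕ => 1 + α/(n:ℝ)) atTop (𝓝 (1+0)) :=
        tendsto_const_nhds.add (hc α)
      have hC : Tendsto (fun n : ℕ => 1 + β/(n:ℝ)) atTop (𝓝 (1+0)) :=
        tendsto_const_nhds.add (hc β)
      have := hA.div (hB.mul hC) (by norm_num)
      simpa [Pi.div_def] using this
    apply h0.congr'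
    filter_upwards [eventually_gt_atTop 0] with n hn
    have hn' : (0:ℝ) < n := by exact_mod_cast hn
    field_simp
    ring
  -- GammaSeq quotient tends to the Gamma quotient
  have hGS : Tendsto (fun n : ℕ => Real.GammaSeq (α+β) n / (Real.GammaSeq α n * Real.GammaSeq β n))
      atTop (𝓝 (Real.Gamma (α+β) / (Real.Gamma α * Real.Gamma β))) :=
    (Real.GammaSeq_tendsto_Gamma (α+β)).div
      ((Real.GammaSeq_tendsto_Gamma α).mul (Real.GammaSeq_tendsto_Gamma β))
      (by positivity)
  have := hGS.mul hrat
  rw [mul_one] at this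
  apply this.congr'
  filter_upwards [eventually_gt_atTop 0] with n hn
  have hn' : (0:ℝ) < n := by exact_mod_cast hn
  have hfac : (0:ℝ) < n.factorial := by positivity
  have hpα := pk_pos hα n; have hpβ := pk_pos hβ n; have hpγ := pk_pos hγ n
  have hrp : (0:ℝ) < (n:ℝ)^α := rpow_pos_of_pos hn' α
  have hrq : (0:ℝ) < (n:ℝ)^β := rpow_pos_of_pos hn' β
  have hradd : (n:ℝ)^(α+β) = (n:ℝ)^α * (n:ℝ)^β := rpow_add hn' α β
  rw [gammaSeq_eq, gammaSeq_eq, gammaSeq_eq, bb]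
  rw [pk_succ, pk_succ, pk_succ, hradd]
  have hαn : (0:ℝ) < α + n := by positivity
  have hβn : (0:ℝ) < β + n := by positivity
  have hγn : (0:ℝ) < α + β + n := by positivity
  field_simp

-- fragment to append conceptually: HasSum for cc
lemma hasSum_cc {α β : ℝ} (hα : 0 < α) (hβ : 0 < β) :
    HasSum (cc α β) ((1/α) * (Real.Gamma (α+β) / (Real.Gamma α * Real.Gamma β))) := by
  have hnn : ∀ n, 0 ≤ cc α β n := fun n => (cc_pos hα hβ n).le
  rw [hasSum_iff_tendsto_nat_of_nonneg hnn]
  have h1 : Tendsto (fun n : ℕ => (1/α) * ((n:ℝ) * bb α β n)) atTop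
      (𝓝 ((1/α) * (Real.Gamma (α+β) / (Real.Gamma α * Real.Gamma β)))) :=
    (tendsto_nbb hα hβ).const_mul _
  exact h1.congr (fun n => (cc_partial hα hβ n).symm)
lemma aaE_zero (α β : ℝ) : aaE α β 0 = 1 := by simp [aaE, pk]
lemma aaE_succ_eq {α β : ℝ} (hα : 0 < α) (hβ : 0 < β) (n : ℕ) :
    aaE α β (n+1) = cc α β n + bb α β (n+1) - bb α β n := by
  have := key_rec hα hβ n; linarith

lemma aaE_abs_le {α β : ℝ} (hα : 0 < α) (hα1 : α ≤ 1) (hβ : 0 < β) (hβ1 : β ≤ 1) (n : ℕ) :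
    |aaE α β n| ≤ 3 := by
  cases n with
  | zero => rw [aaE_zero]; norm_num
  | succ n =>
    rw [aaE_succ_eq hα hβ]
    have h1 := cc_pos hα hβ n
    have h2 := cc_le_one hα hα1 hβ hβ1 n
    have h3 := bb_pos hα hβ n
    have h4 := bb_le_one hα hα1 hβ hβ1 n
    have h5 := bb_pos hα hβ (n+1)
    have h6 := bb_le_one hα hα1 hβ hβ1 (n+1)
    rw [abs_le]; constructor <;> linarith

lemma summable_geom_bound {f : ℕ → ℝ} {C z : ℝ} (hz0 : 0 ≤ z) (hz1 : z < 1)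
    (hf : ∀ n, |f n| ≤ C) : Summable (fun n => f n * z^n) := by
  apply Summable.of_norm_bounded (g := fun n => C * z^n)
    ((summable_geometric_of_lt_one hz0 hz1).mul_left C)
  intro n
  rw [norm_mul, norm_pow, Real.norm_eq_abs, Real.norm_eq_abs, abs_of_nonneg hz0]
  exact mul_le_mul_of_nonneg_right (hf n) (pow_nonneg hz0 n)

section sums
variable {α β z : ℝ} (hα : 0 < α) (hα1 : α ≤ 1) (hβ : 0 < β) (hβ1 : β ≤ 1)
  (hz0 : 0 ≤ z) (hz1 : z < 1)
include hα hα1 hβ hβ1 hz0 hz1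

lemma summable_bbz : Summable (fun n => bb α β n * z^n) :=
  summable_geom_bound hz0 hz1 (fun n => by
    rw [abs_of_nonneg (bb_pos hα hβ n).le]; exact bb_le_one hα hα1 hβ hβ1 n)

lemma summable_aaz : Summable (fun n => aaE α β n * z^n) :=
  summable_geom_bound hz0 hz1 (fun n => aaE_abs_le hα hα1 hβ hβ1 n)

lemma summable_ccz : Summable (fun n => cc α β n * z^n) :=
  summable_geom_bound hz0 hz1 (fun n => by
    rw [abs_of_nonneg (cc_pos hα hβ n).le]; exact cc_le_one hα hα1 hβ hβ1 n)

set_option maxHeartbeats 1000000 in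
lemma EK_identity :
    (∑' n, aaE α β n * z^n) - (1-z) * (∑' n, bb α β n * z^n)
      = z * ∑' n, cc α β n * z^n := by
  have ha := (summable_aaz hα hα1 hβ hβ1 hz0 hz1).hasSum
  have hb := (summable_bbz hα hα1 hβ hβ1 hz0 hz1).hasSum
  have hc := (summable_ccz hα hα1 hβ hβ1 hz0 hz1).hasSum
  set A := ∑' n, aaE α β n * z^n
  set B := ∑' n, bb α β n * z^n
  set C := ∑' n, cc α β n * z^n
  have hab : HasSum (fun n => (aaE α β n - bb α β n) * z^n) (A - B) := by
    have e : (fun n => (aaE α β n - bb α β n) * z ^ n)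
        = fun n => aaE α β n * z^n - bb α β n * z^n := by funext n; ring
    rw [e]; exact ha.sub hb
  have h0 : ∑ i ∈ Finset.range 1, (aaE α β i - bb α β i) * z ^ i = 0 := by
    simp [aaE_zero, bb_zero hα hβ]
  have hshift : HasSum (fun n => (aaE α β (n+1) - bb α β (n+1)) * z^(n+1)) (A - B) := by
    have hab' : HasSum (fun n => (aaE α β n - bb α β n) * z^n)
        ((A - B) + ∑ i ∈ Finset.range 1, (aaE α β i - bb α β i) * z ^ i) := by
      rw [h0, add_zero]; exact hab
    exact (hasSum_nat_add_iff 1).2 hab'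
  have hbs : HasSum (fun n => bb α β n * z^(n+1)) (z * B) := by
    have h := hb.mul_left z
    have e : (fun n => z * (bb α β n * z^n)) = fun n => bb α β n * z^(n+1) := by funext n; ring
    rwa [e] at h
  have hsum2 : HasSum (fun n => cc α β n * z^(n+1)) (A - B + z*B) := by
    have h := hshift.add hbs
    have e : (fun n => (aaE α β (n+1) - bb α β (n+1)) * z^(n+1) + bb α β n * z^(n+1))
        = fun n => cc α β n * z^(n+1) := by
      funext n; rw [← key_rec hα hβ n]; ring
    rwa [e] at h
  have hcs : HasSum (fun n => cc α β n * z^(n+1)) (z * C) := by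
    have h := hc.mul_left z
    have e : (fun n => z * (cc α β n * z^n)) = fun n => cc α β n * z^(n+1) := by funext n; ring
    rwa [e] at h
  have huniq := hsum2.unique hcs
  linarith
end sums

open Finset in
lemma claimC (n : ℕ) {a b : ℝ} (ha0 : 0 ≤ a) (ha1 : a ≤ 1) (hb0 : 0 ≤ b) (hb1 : b ≤ 1) :
    a^n + b^n + (1 - a*b)^n ≤ 1 + (1-a)^n + (1-b)^n + (a*b)^n := by
  match n with
  | 0 => norm_num
  | 1 => nlinarith [mul_nonneg (sub_nonneg.2 ha1) (sub_nonneg.2 hb1)]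
  | (m+2) =>
    set n := m + 2 with hn
    have hA0 : (0:ℝ) ≤ 1 - a := by linarith
    have hbn : b^n ≤ b := pow_le_of_le_one hb0 hb1 (by omega)
    have h1b : 1 - b ≤ 1 - b^n := by linarith
    have h1bn0 : (0:ℝ) ≤ 1 - b^n := le_trans (by linarith) h1b
    have hbin : (1 - a*b)^n = ∑ k ∈ range (n+1), (1-a)^k * (a*(1-b))^(n-k) * (n.choose k) := by
      rw [show (1 - a*b) = (1-a) + a*(1-b) by ring, add_pow]
    have hone : (1:ℝ) = ∑ k ∈ range (n+1), (1-a)^k * a^(n-k) * (n.choose k) := by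
      have := add_pow (1-a) a n
      simp only [show (1-a) + a = 1 by ring, one_pow] at this
      exact this
    have hsplit : ∀ y : ℝ, ∑ k ∈ range (n+1), (1-a)^k * y^(n-k) * (n.choose k)
        = (∑ k ∈ range (m+1), (1-a)^(k+1) * y^(n-(k+1)) * (n.choose (k+1))) + y^n + (1-a)^n := by
      intro y
      rw [sum_range_succ, sum_range_succ']
      simp only [Nat.choose_self, Nat.choose_zero_right, Nat.sub_self, Nat.sub_zero,
        pow_zero, Nat.cast_one, one_mul, mul_one]
      try ring
    have hmid : ∑ k ∈ range (m+1), (1-a)^(k+1) * (a*(1-b))^(n-(k+1)) * (n.choose (k+1))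
        ≤ (1 - b^n) * ∑ k ∈ range (m+1), (1-a)^(k+1) * a^(n-(k+1)) * (n.choose (k+1)) := by
      rw [mul_sum]
      apply sum_le_sum
      intro k hk
      have hkm : k < m + 1 := mem_range.1 hk
      have hbb : (1-b)^(n-(k+1)) ≤ 1 - b^n := by
        calc (1-b)^(n-(k+1)) ≤ (1-b) := pow_le_of_le_one (by linarith) (by linarith) (by omega)
        _ ≤ 1 - b^n := h1b
      rw [mul_pow]
      have h1 : (1-a)^(k+1) * (a^(n-(k+1)) * (1-b)^(n-(k+1))) ≤ (1-a)^(k+1) * (a^(n-(k+1)) * (1-b^n)) := by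
        apply mul_le_mul_of_nonneg_left _ (by positivity)
        exact mul_le_mul_of_nonneg_left hbb (by positivity)
      calc (1-a)^(k+1) * (a^(n-(k+1)) * (1-b)^(n-(k+1))) * (n.choose (k+1) : ℝ)
          ≤ (1-a)^(k+1) * (a^(n-(k+1)) * (1-b^n)) * (n.choose (k+1) : ℝ) := by
            apply mul_le_mul_of_nonneg_right h1 (by positivity)
        _ = (1 - b^n) * ((1-a)^(k+1) * a^(n-(k+1)) * (n.choose (k+1) : ℝ)) := by ring
    have hmidsum : ∑ k ∈ range (m+1), (1-a)^(k+1) * a^(n-(k+1)) * (n.choose (k+1))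
        = 1 - a^n - (1-a)^n := by
      have h := hone
      rw [hsplit a] at h
      linarith
    have key : (1 - a*b)^n ≤ (1-a)^n + (a*(1-b))^n + (1-b^n) * (1 - a^n - (1-a)^n) := by
      rw [hbin, hsplit (a*(1-b))]
      rw [hmidsum] at hmid
      linarith
    have hab : (a*b)^n = a^n * b^n := mul_pow _ _ _
    have hy : (a*(1-b))^n = a^n * (1-b)^n := mul_pow _ _ _
    have hU : (0:ℝ) ≤ (1-a)^n := pow_nonneg hA0 n
    have hV : (0:ℝ) ≤ (1-b)^n := pow_nonneg (by linarith) n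
    have han : a^n ≤ 1 := pow_le_one₀ ha0 ha1
    have hbn1 : b ^ n ≤ 1 := pow_le_one₀ hb0 hb1
    nlinarith [mul_nonneg hU (sub_nonneg.2 hbn1), mul_nonneg hV (sub_nonneg.2 han)]

open Finset in
lemma claimC2 (n : ℕ) {a b : ℝ} (ha0 : 0 ≤ a) (ha1 : a ≤ 1) (hb0 : 0 ≤ b) (hb1 : b ≤ 1) :
    (a*b)^n + (1-a)^n + (1-b)^n ≤ 1 + (1 - a*b)^n + a^n + b^n := by
  have h1 : (a*b)^n ≤ a^n := pow_le_pow_left₀ (by positivity) (by nlinarith) n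
  have h2 : (1-a)^n ≤ (1-a*b)^n := pow_le_pow_left₀ (by nlinarith) (by nlinarith) n
  have h3 : (1-b)^n ≤ 1 := pow_le_one₀ (by linarith) (by linarith)
  have h4 : 0 ≤ b^n := pow_nonneg hb0 n
  linarith

lemma hypK_eq (p q z : ℝ) :
    hypF (1/q) (1-1/p) (1-1/p+1/q) z = ∑' n, bb (1/q) (1-1/p) n * z^n := by
  have h2 : (1:ℝ)/q + (1-1/p) = 1-1/p+1/q := by ring
  simp only [hypF, bb, pk, h2]

lemma hypE_eq (p q z : ℝ) :
    hypF (1/q) (-(1/p)) (1-1/p+1/q) z = ∑' n, aaE (1/q) (1-1/p) n * z^n := by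
  have h1 : ((1:ℝ)-1/p) - 1 = -(1/p) := by ring
  have h2 : (1:ℝ)/q + (1-1/p) = 1-1/p+1/q := by ring
  simp only [hypF, aaE, pk, h1, h2]

section main
variable {p q : ℝ} (hp : 1 < p) (hq : 1 < q)
include hp hq

lemma alpha_facts : 0 < 1/q ∧ 1/q ≤ 1 ∧ 0 < 1-1/p ∧ 1-1/p ≤ 1 := by
  have h1 : 0 < 1/q := by positivity
  have h2 : 1/q ≤ 1 := by rw [div_le_one (by linarith)]; linarith
  have h3 : 1/p < 1 := by rw [div_lt_one (by linarith)]; linarith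
  have h4 : 0 < 1/p := by positivity
  exact ⟨h1, h2, by linarith, by linarith⟩

lemma delta_eq {t : ℝ} (ht0 : 0 < t) (ht1 : t < 1) :
    DeltaGen p q t = (piGen p q / 2) *
      ((∑' n, cc (1/q) (1-1/p) n * (t^p)^n) - ∑' n, cc (1/q) (1-1/p) n * (1-t^p)^n) := by
  obtain ⟨hα, hα1, hβ, hβ1⟩ := alpha_facts hp hq
  have hp0 : (0:ℝ) < p := by linarith
  set z := t^p with hzdef
  have hz0 : 0 < z := rpow_pos_of_pos ht0 p
  have hz1 : z < 1 := rpow_lt_one ht0.le ht1 hp0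
  have hw0 : (0:ℝ) < 1 - z := by linarith
  have hw1 : 1 - z < 1 := by linarith
  have htp : ((1 - z) ^ (1/p)) ^ p = 1 - z := by
    rw [← Real.rpow_mul hw0.le, one_div_mul_cancel hp0.ne', Real.rpow_one]
  have hEz : Egen p q t = (piGen p q / 2) * ∑' n, aaE (1/q) (1-1/p) n * z^n := by
    rw [Egen, hypE_eq]
  have hKz : Kgen p q t = (piGen p q / 2) * ∑' n, bb (1/q) (1-1/p) n * z^n := by
    rw [Kgen, hypK_eq]
  have hEw : Egen p q ((1 - z) ^ (1/p)) =
      (piGen p q / 2) * ∑' n, aaE (1/q) (1-1/p) n * (1-z)^n := by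
    rw [Egen, htp, hypE_eq]
  have hKw : Kgen p q ((1 - z) ^ (1/p)) =
      (piGen p q / 2) * ∑' n, bb (1/q) (1-1/p) n * (1-z)^n := by
    rw [Kgen, htp, hypK_eq]
  have hEK1 := EK_identity hα hα1 hβ hβ1 hz0.le hz1
  have hEK2 := EK_identity hα hα1 hβ hβ1 hw0.le hw1
  rw [DeltaGen, htp, hEz, hKz, hEw, hKw]
  have e1 : (piGen p q / 2) * (∑' n, aaE (1/q) (1-1/p) n * z^n)
      - (1-z) * ((piGen p q / 2) * ∑' n, bb (1/q) (1-1/p) n * z^n)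
      = (piGen p q / 2) * ((∑' n, aaE (1/q) (1-1/p) n * z^n)
        - (1-z) * ∑' n, bb (1/q) (1-1/p) n * z^n) := by ring
  have e2 : (piGen p q / 2) * (∑' n, aaE (1/q) (1-1/p) n * (1-z)^n)
      - z * ((piGen p q / 2) * ∑' n, bb (1/q) (1-1/p) n * (1-z)^n)
      = (piGen p q / 2) * ((∑' n, aaE (1/q) (1-1/p) n * (1-z)^n)
        - (1-(1-z)) * ∑' n, bb (1/q) (1-1/p) n * (1-z)^n) := by ring
  rw [e1, hEK1, e2, hEK2]
  field_simp
  ring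
end main

set_option maxHeartbeats 2000000 in
theorem stmt11 (p q : ℝ) (hp : 1 < p) (hq : 1 < q)
    (h1 : 2 + 1/p + 1/p^2 ≤ 5/p + 1/q) (h1' : 5/p + 1/q < 3 + 1/p^2)
    (h2 : 0 < 20 - 42/p + 6/q + 21/p^2 - 2/q^2 - 20/(p*q) + 9/(p^2*q) - 3/p^3 - 1/(p^3*q))
    (r s : ℝ) (hr : r ∈ Set.Ioo (0:ℝ) 1) (hs : s ∈ Set.Ioo (0:ℝ) 1) :
    (1 - 1/p) * piGen p q / (2 * (1 + 1/q - 1/p)) - 1 <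
      DeltaGen p q (r * s) - DeltaGen p q r - DeltaGen p q s ∧
    DeltaGen p q (r * s) - DeltaGen p q r - DeltaGen p q s <
      1 - (1 - 1/p) * piGen p q / (2 * (1 + 1/q - 1/p)) := by
  obtain ⟨hα, hα1, hβ, hβ1⟩ := alpha_facts hp hq
  obtain ⟨hr0, hr1⟩ := hr
  obtain ⟨hs0, hs1⟩ := hs
  have hp0 : (0:ℝ) < p := by linarith
  have hq0 : (0:ℝ) < q := by linarith
  have hrs0 : 0 < r*s := mul_pos hr0 hs0
  have hrs1 : r*s < 1 := by nlinarith
  have ha0 : 0 < r^p := rpow_pos_of_pos hr0 p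
  have ha1 : r^p < 1 := rpow_lt_one hr0.le hr1 hp0
  have hb0 : 0 < s^p := rpow_pos_of_pos hs0 p
  have hb1 : s^p < 1 := rpow_lt_one hs0.le hs1 hp0
  have habmul : (r*s)^p = r^p * s^p := Real.mul_rpow hr0.le hs0.le
  have hab0 : 0 < r^p * s^p := mul_pos ha0 hb0
  have hab1 : r^p * s^p < 1 := by nlinarith
  have hd1 := delta_eq hp hq hrs0 hrs1
  rw [habmul] at hd1
  have hd2 := delta_eq hp hq hr0 hr1
  have hd3 := delta_eq hp hq hs0 hs1
  -- Gamma positivity and the value of the total sum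
  have hγpos : (0:ℝ) < 1 - 1/p + 1/q := by linarith
  have hGa := Real.Gamma_pos_of_pos hα
  have hGb := Real.Gamma_pos_of_pos hβ
  have hGc := Real.Gamma_pos_of_pos hγpos
  have hπ2pos : 0 < piGen p q / 2 := by
    rw [piGen]
    have : 0 < Real.Gamma (1-1/p) * Real.Gamma (1/q) / Real.Gamma (1-1/p+1/q) :=
      div_pos (mul_pos hGb hGa) hGc
    positivity
  have hccsum := hasSum_cc hα hβ
  have hone : (piGen p q / 2) *
      ((1/(1/q)) * (Real.Gamma (1/q + (1-1/p)) / (Real.Gamma (1/q) * Real.Gamma (1-1/p)))) = 1 := by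
    rw [piGen, show (1:ℝ)/q + (1-1/p) = 1-1/p+1/q by ring]
    have hGa' := hGa.ne'
    have hGb' := hGb.ne'
    have hGc' := hGc.ne'
    generalize Real.Gamma (1/q) = Ga at *
    generalize Real.Gamma (1-1/p) = Gb at *
    generalize Real.Gamma (1-1/p+1/q) = Gc at *
    field_simp
  have hcc0 : cc (1/q) (1-1/p) 0 = (1-1/p)/(1/q + (1-1/p)) := by
    rw [cc, bb_zero hα hβ]
    norm_num
  have hBeq : (1 - 1/p) * piGen p q / (2 * (1 + 1/q - 1/p))
      = (piGen p q / 2) * cc (1/q) (1-1/p) 0 := by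
    rw [hcc0, show (1:ℝ) + 1/q - 1/p = 1/q + (1-1/p) by ring]
    have hne : (0:ℝ) < 1/q + (1-1/p) := by linarith
    have hne' := hne.ne'
    generalize piGen p q = P
    field_simp
  -- the six hasSums
  have Sab := (summable_ccz hα hα1 hβ hβ1 hab0.le hab1).hasSum
  have Sab' := (summable_ccz hα hα1 hβ hβ1 (by linarith : (0:ℝ) ≤ 1 - r^p*s^p)
    (by linarith : 1 - r^p*s^p < 1)).hasSum
  have Sa := (summable_ccz hα hα1 hβ hβ1 ha0.le ha1).hasSum
  have Sa' := (summable_ccz hα hα1 hβ hβ1 (by linarith : (0:ℝ) ≤ 1 - r^p)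
    (by linarith : 1 - r^p < 1)).hasSum
  have Sb := (summable_ccz hα hα1 hβ hβ1 hb0.le hb1).hasSum
  have Sb' := (summable_ccz hα hα1 hβ hβ1 (by linarith : (0:ℝ) ≤ 1 - s^p)
    (by linarith : 1 - s^p < 1)).hasSum
  have hGcomb : HasSum (fun n => cc (1/q) (1-1/p) n *
      ((r^p*s^p)^n - (1-r^p*s^p)^n - (r^p)^n + (1-r^p)^n - (s^p)^n + (1-s^p)^n))
      ((∑' n, cc (1/q) (1-1/p) n * (r^p*s^p)^n) - (∑' n, cc (1/q) (1-1/p) n * (1-r^p*s^p)^n)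
       - (∑' n, cc (1/q) (1-1/p) n * (r^p)^n) + (∑' n, cc (1/q) (1-1/p) n * (1-r^p)^n)
       - (∑' n, cc (1/q) (1-1/p) n * (s^p)^n) + (∑' n, cc (1/q) (1-1/p) n * (1-s^p)^n)) := by
    have h := ((((Sab.sub Sab').sub Sa).add Sa').sub Sb).add Sb'
    have e : (fun n => cc (1/q) (1-1/p) n * (r^p*s^p)^n - cc (1/q) (1-1/p) n * (1-r^p*s^p)^n
        - cc (1/q) (1-1/p) n * (r^p)^n + cc (1/q) (1-1/p) n * (1-r^p)^n
        - cc (1/q) (1-1/p) n * (s^p)^n + cc (1/q) (1-1/p) n * (1-s^p)^n)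
        = fun n => cc (1/q) (1-1/p) n *
          ((r^p*s^p)^n - (1-r^p*s^p)^n - (r^p)^n + (1-r^p)^n - (s^p)^n + (1-s^p)^n) := by
      funext n; ring
    rwa [e] at h
  set Gv := (∑' n, cc (1/q) (1-1/p) n * (r^p*s^p)^n) - (∑' n, cc (1/q) (1-1/p) n * (1-r^p*s^p)^n)
       - (∑' n, cc (1/q) (1-1/p) n * (r^p)^n) + (∑' n, cc (1/q) (1-1/p) n * (1-r^p)^n)
       - (∑' n, cc (1/q) (1-1/p) n * (s^p)^n) + (∑' n, cc (1/q) (1-1/p) n * (1-s^p)^n) with hGvdef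
  set Lv := (1/(1/q)) * (Real.Gamma (1/q + (1-1/p)) / (Real.Gamma (1/q) * Real.Gamma (1-1/p)))
    with hLvdef
  have hΔ : DeltaGen p q (r*s) - DeltaGen p q r - DeltaGen p q s = (piGen p q / 2) * Gv := by
    rw [hd1, hd2, hd3, hGvdef]; ring
  -- lower bound
  have hFl : HasSum (fun n => cc (1/q) (1-1/p) n *
      ((r^p*s^p)^n - (1-r^p*s^p)^n - (r^p)^n + (1-r^p)^n - (s^p)^n + (1-s^p)^n)
      + cc (1/q) (1-1/p) n) (Gv + Lv) := hGcomb.add hccsum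
  have hFl0 : cc (1/q) (1-1/p) 0 *
      ((r^p*s^p)^0 - (1-r^p*s^p)^0 - (r^p)^0 + (1-r^p)^0 - (s^p)^0 + (1-s^p)^0)
      + cc (1/q) (1-1/p) 0 = cc (1/q) (1-1/p) 0 := by
    norm_num
  have hshiftl : HasSum (fun n => cc (1/q) (1-1/p) (n+1) *
      ((r^p*s^p)^(n+1) - (1-r^p*s^p)^(n+1) - (r^p)^(n+1) + (1-r^p)^(n+1)
        - (s^p)^(n+1) + (1-s^p)^(n+1)) + cc (1/q) (1-1/p) (n+1))
      (Gv + Lv - cc (1/q) (1-1/p) 0) := by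
    refine (hasSum_nat_add_iff (f := fun n => cc (1/q) (1-1/p) n *
      ((r^p*s^p)^n - (1-r^p*s^p)^n - (r^p)^n + (1-r^p)^n
        - (s^p)^n + (1-s^p)^n) + cc (1/q) (1-1/p) n) 1).2 ?_
    have e : Gv + Lv - cc (1/q) (1-1/p) 0 + ∑ i ∈ Finset.range 1, (cc (1/q) (1-1/p) i *
      ((r^p*s^p)^i - (1-r^p*s^p)^i - (r^p)^i + (1-r^p)^i
        - (s^p)^i + (1-s^p)^i) + cc (1/q) (1-1/p) i) = Gv + Lv := by
      simp only [Finset.sum_range_one, pow_zero]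
      ring
    rw [e]
    exact hFl
  have hnnl : ∀ n : ℕ, 0 ≤ cc (1/q) (1-1/p) (n+1) *
      ((r^p*s^p)^(n+1) - (1-r^p*s^p)^(n+1) - (r^p)^(n+1) + (1-r^p)^(n+1)
        - (s^p)^(n+1) + (1-s^p)^(n+1)) + cc (1/q) (1-1/p) (n+1) := by
    intro n
    have hcl := claimC (n+1) ha0.le ha1.le hb0.le hb1.le
    have hcp := (cc_pos hα hβ (n+1)).le
    nlinarith
  have hp0l : 0 < cc (1/q) (1-1/p) (0+1) *
      ((r^p*s^p)^(0+1) - (1-r^p*s^p)^(0+1) - (r^p)^(0+1) + (1-r^p)^(0+1)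
        - (s^p)^(0+1) + (1-s^p)^(0+1)) + cc (1/q) (1-1/p) (0+1) := by
    have hcp := cc_pos hα hβ 1
    have hprod : 0 < (1 - r^p) * (1 - s^p) := mul_pos (by linarith) (by linarith)
    simp only [Nat.zero_add, zero_add, pow_one]
    nlinarith
  have hposL : 0 < Gv + Lv - cc (1/q) (1-1/p) 0 := by
    rw [← hshiftl.tsum_eq]
    exact Summable.tsum_pos hshiftl.summable hnnl 0 hp0l
  -- upper bound
  have hFu : HasSum (fun n => cc (1/q) (1-1/p) n - cc (1/q) (1-1/p) n *
      ((r^p*s^p)^n - (1-r^p*s^p)^n - (r^p)^n + (1-r^p)^n - (s^p)^n + (1-s^p)^n))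
      (Lv - Gv) := hccsum.sub hGcomb
  have hFu0 : cc (1/q) (1-1/p) 0 - cc (1/q) (1-1/p) 0 *
      ((r^p*s^p)^0 - (1-r^p*s^p)^0 - (r^p)^0 + (1-r^p)^0 - (s^p)^0 + (1-s^p)^0)
      = cc (1/q) (1-1/p) 0 := by
    norm_num
  have hshiftu : HasSum (fun n => cc (1/q) (1-1/p) (n+1) - cc (1/q) (1-1/p) (n+1) *
      ((r^p*s^p)^(n+1) - (1-r^p*s^p)^(n+1) - (r^p)^(n+1) + (1-r^p)^(n+1)
        - (s^p)^(n+1) + (1-s^p)^(n+1)))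
      (Lv - Gv - cc (1/q) (1-1/p) 0) := by
    refine (hasSum_nat_add_iff (f := fun n => cc (1/q) (1-1/p) n - cc (1/q) (1-1/p) n *
      ((r^p*s^p)^n - (1-r^p*s^p)^n - (r^p)^n + (1-r^p)^n
        - (s^p)^n + (1-s^p)^n)) 1).2 ?_
    have e : Lv - Gv - cc (1/q) (1-1/p) 0 + ∑ i ∈ Finset.range 1, (cc (1/q) (1-1/p) i - cc (1/q) (1-1/p) i *
      ((r^p*s^p)^i - (1-r^p*s^p)^i - (r^p)^i + (1-r^p)^i
        - (s^p)^i + (1-s^p)^i)) = Lv - Gv := by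
      simp only [Finset.sum_range_one, pow_zero]
      ring
    rw [e]
    exact hFu
  have hnnu : ∀ n : ℕ, 0 ≤ cc (1/q) (1-1/p) (n+1) - cc (1/q) (1-1/p) (n+1) *
      ((r^p*s^p)^(n+1) - (1-r^p*s^p)^(n+1) - (r^p)^(n+1) + (1-r^p)^(n+1)
        - (s^p)^(n+1) + (1-s^p)^(n+1)) := by
    intro n
    have hcl := claimC2 (n+1) ha0.le ha1.le hb0.le hb1.le
    have hcp := (cc_pos hα hβ (n+1)).le
    nlinarith
  have hp0u : 0 < cc (1/q) (1-1/p) (0+1) - cc (1/q) (1-1/p) (0+1) *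
      ((r^p*s^p)^(0+1) - (1-r^p*s^p)^(0+1) - (r^p)^(0+1) + (1-r^p)^(0+1)
        - (s^p)^(0+1) + (1-s^p)^(0+1)) := by
    have hcp := cc_pos hα hβ 1
    have h5 : 0 < r^p * (1 - s^p) := mul_pos ha0 (by linarith)
    simp only [Nat.zero_add, zero_add, pow_one]
    nlinarith [mul_pos hcp hb0, mul_pos hcp h5]
  have hposU : 0 < Lv - Gv - cc (1/q) (1-1/p) 0 := by
    rw [← hshiftu.tsum_eq]
    exact Summable.tsum_pos hshiftu.summable hnnu 0 hp0u
  rw [hLvdef] at hposL hposU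
  constructor
  · rw [hΔ, hBeq]
    nlinarith [mul_pos hπ2pos hposL, hone]
  · rw [hΔ, hBeq]
    nlinarith [mul_pos hπ2pos hposU, hone]
end
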